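/- arXiv:1512.05490 — 10 statements merged into one kernel-verified Lean document; each statement's English description precedes it below -/
import Mathlib

section
/- Every convex contraction on a complete metric space has a unique fixed point. That is, if (X,d) is a nonempty complete metric space and f : X → X is continuous and there exist a, b ∈ (0,1) with a + b < 1 such that d(f(f(x)), f(f(y))) ≤ a·d(f(x), f(y)) + b·d(x,y) for all x, y ∈ X, then f has a unique fixed point x* ∈ X. -/
/-- Every convex contraction on a nonempty complete metric space has a
unique fixed point. -/
theorem convex_contraction_fixed_point
    {X : Type*} [MetricSpace X] [CompleteSpace X] [Nonempty X]
    (f : X → X) (hf : Continuous f)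
    (a b : ℝ) (ha : a ∈ Set.Ioo (0 : ℝ) 1) (hb : b ∈ Set.Ioo (0 : ℝ) 1)
    (hab : a + b < 1)
    (hcc : ∀ x y : X, dist (f (f x)) (f (f y)) ≤ a * dist (f x) (f y) + b * dist x y) :
    ∃! x : X, f x = x := by
  obtain ⟨ha0, ha1⟩ := ha
  obtain ⟨hb0, hb1⟩ := hb
  set c : ℝ := a + b with hc
  have hc0 : 0 < c := by positivity
  have hc1 : c < 1 := hab
  set s : ℝ := Real.sqrt c with hs
  have hs0 : 0 < s := Real.sqrt_pos.mpr hc0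
  have hs1 : s < 1 := by
    rw [hs, show (1:ℝ) = Real.sqrt 1 by simp]
    exact Real.sqrt_lt_sqrt (le_of_lt hc0) hc1
  have hs2 : s * s = c := Real.mul_self_sqrt hc0.le
  obtain ⟨x0⟩ := ‹Nonempty X›
  set u : ℕ → X := fun n => f^[n] x0 with hu
  set d : ℕ → ℝ := fun n => dist (u (n+1)) (u n) with hd
  have hrec : ∀ n, d (n+2) ≤ a * d (n+1) + b * d n := by
    intro n
    have h := hcc (f^[n+1] x0) (f^[n] x0)
    simp only [← Function.iterate_succ_apply' f] at h
    simp only [hd, hu]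
    convert h using 3
  set M : ℝ := max (d 0) (d 1 / s) with hM
  have hM0 : 0 ≤ M := le_trans dist_nonneg (le_max_left _ _)
  have key : ∀ n, d n ≤ M * s ^ n ∧ d (n+1) ≤ M * s ^ (n+1) := by
    intro n
    induction n with
    | zero =>
      constructor
      · simp only [pow_zero, mul_one]; exact le_max_left _ _
      · have h : d 1 / s ≤ M := le_max_right _ _
        rw [div_le_iff₀ hs0] at h
        simpa using h
    | succ n ih =>
      refine ⟨ih.2, ?_⟩
      calc d (n+2) ≤ a * d (n+1) + b * d n := hrec n
        _ ≤ a * (M * s ^ (n+1)) + b * (M * s ^ n) := by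
            nlinarith [mul_le_mul_of_nonneg_left ih.2 ha0.le,
              mul_le_mul_of_nonneg_left ih.1 hb0.le]
        _ ≤ a * (M * s ^ n) + b * (M * s ^ n) := by
            have hss : s ^ (n+1) ≤ s ^ n := by
              rw [pow_succ]
              nlinarith [pow_nonneg hs0.le n]
            nlinarith [mul_le_mul_of_nonneg_left hss (by positivity : (0:ℝ) ≤ a * M)]
        _ = c * (M * s ^ n) := by ring
        _ = M * s ^ (n+2) := by rw [← hs2]; ring
  have hcauchy : CauchySeq u := by
    apply cauchySeq_of_le_geometric s M hs1
    intro n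
    have := (key n).1
    simpa [hd, dist_comm] using this
  obtain ⟨x, hx⟩ := cauchySeq_tendsto_of_complete hcauchy
  have hfx : f x = x := by
    have h1 : Filter.Tendsto (fun n => u (n+1)) Filter.atTop (nhds x) :=
      hx.comp (Filter.tendsto_add_atTop_nat 1)
    have h2 : Filter.Tendsto (fun n => f (u n)) Filter.atTop (nhds (f x)) :=
      (hf.continuousAt.tendsto).comp hx
    have heq : (fun n => f (u n)) = fun n => u (n+1) := by
      funext n; simp [hu, Function.iterate_succ_apply']
    rw [heq] at h2
    exact tendsto_nhds_unique h2 h1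
  refine ⟨x, hfx, ?_⟩
  intro y hy
  have := hcc y x
  rw [hy, hfx, hy, hfx] at this
  have hd0 : dist y x ≤ 0 := by nlinarith [dist_nonneg (x := y) (y := x)]
  have := dist_nonneg (x := y) (y := x)
  have : dist y x = 0 := le_antisymm hd0 this
  exact dist_eq_zero.mp this
end

section
/- If f : X → X is a convex contraction on a complete metric space (X,d) with unique fixed point x*, then for every x ∈ X the sequence of Picard iterates f^[n](x) converges to x*. -/
/-- Picard iterates of a convex contraction converge to its unique fixed point. -/
theorem convex_contraction_picard_tendsto
    {X : Type*} [MetricSpace X] [CompleteSpace X] [Nonempty X]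
    (f : X → X) (hf : Continuous f)
    (a b : ℝ) (ha : a ∈ Set.Ioo (0 : ℝ) 1) (hb : b ∈ Set.Ioo (0 : ℝ) 1)
    (hab : a + b < 1)
    (hcc : ∀ x y : X, dist (f (f x)) (f (f y)) ≤ a * dist (f x) (f y) + b * dist x y)
    (xstar : X) (hfix : f xstar = xstar)
    (huniq : ∀ y : X, f y = y → y = xstar) :
    ∀ x : X, Filter.Tendsto (fun n : ℕ => f^[n] x) Filter.atTop (nhds xstar) := by
  intro x
  set c : ℝ := a + b with hc
  have hc0 : 0 ≤ c := by have := ha.1; have := hb.1; positivity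
  have hc1 : c < 1 := hab
  set M : ℝ := max (dist x xstar) (dist (f x) xstar) with hM
  have hM0 : 0 ≤ M := le_trans dist_nonneg (le_max_left _ _)
  have key : ∀ n : ℕ, dist (f^[n] x) xstar ≤ c ^ (n / 2) * M := by
    intro n
    induction n using Nat.strong_induction_on with
    | _ n ih =>
      match n with
      | 0 =>
        rw [show (0:ℕ)/2 = 0 from rfl, pow_zero, one_mul, Function.iterate_zero_apply]
        exact le_max_left _ _
      | 1 =>
        rw [show (1:ℕ)/2 = 0 from rfl, pow_zero, one_mul, Function.iterate_one]
        exact le_max_right _ _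
      | (n+2) =>
        have h1 := ih (n+1) (by omega)
        have h0 := ih n (by omega)
        have hrec : dist (f^[n+2] x) xstar ≤
            a * dist (f^[n+1] x) xstar + b * dist (f^[n] x) xstar := by
          simpa [Function.iterate_succ_apply', hfix] using hcc (f^[n] x) xstar
        have hpow : c ^ ((n+1)/2) ≤ c ^ (n/2) :=
          pow_le_pow_of_le_one hc0 hc1.le (by omega)
        calc dist (f^[n+2] x) xstar
            ≤ a * dist (f^[n+1] x) xstar + b * dist (f^[n] x) xstar := hrec
          _ ≤ a * (c ^ ((n+1)/2) * M) + b * (c ^ (n/2) * M) := by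
              gcongr
              · exact ha.1.le
              · exact hb.1.le
          _ ≤ a * (c ^ (n/2) * M) + b * (c ^ (n/2) * M) := by
              gcongr
              exact ha.1.le
          _ = c ^ (n/2 + 1) * M := by rw [pow_succ]; ring
          _ = c ^ ((n+2)/2) * M := by rw [show (n+2)/2 = n/2 + 1 from by omega]
  rw [tendsto_iff_dist_tendsto_zero]
  have hdiv : Filter.Tendsto (fun n : ℕ => n / 2) Filter.atTop Filter.atTop :=
    Filter.tendsto_atTop_atTop.mpr fun k => ⟨2 * k, fun n hn => by omega⟩
  have hlim : Filter.Tendsto (fun n : ℕ => c ^ (n / 2) * M) Filter.atTop (nhds 0) := by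
    have h := ((tendsto_pow_atTop_nhds_zero_of_lt_one hc0 hc1).comp hdiv).mul_const M
    simpa using h
  exact squeeze_zero (fun n => dist_nonneg) key hlim
end

section
/- For a convex contraction f on a metric space, the sequence y_n = max{d(f^[n-1](x), f^[n](x)), d(f^[n](x), f^[n+1](x))} satisfies y_{n+2} ≤ d·y_n for every n ≥ 1, where d = a + b < 1; consequently the sequence (f^[n](x)) is Cauchy. -/
/-- For a convex contraction, the sequence
`y n = max (dist (f^[n-1] x) (f^[n] x)) (dist (f^[n] x) (f^[n+1] x))`
satisfies `y (n+2) ≤ (a+b) * y n` for `n ≥ 1`, and the Picard iterates form a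
Cauchy sequence. -/
theorem convex_contraction_y_seq_and_cauchy
    {X : Type*} [MetricSpace X]
    (f : X → X) (a b : ℝ) (ha : 0 ≤ a) (hb : 0 ≤ b) (hab : a + b < 1)
    (hcc : ∀ u v : X, dist (f (f u)) (f (f v)) ≤ a * dist (f u) (f v) + b * dist u v)
    (x : X) :
    (∀ n : ℕ, 1 ≤ n →
      max (dist (f^[(n + 2) - 1] x) (f^[n + 2] x)) (dist (f^[n + 2] x) (f^[(n + 2) + 1] x))
        ≤ (a + b) *
          max (dist (f^[n - 1] x) (f^[n] x)) (dist (f^[n] x) (f^[n + 1] x))) ∧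
    CauchySeq (fun n : ℕ => f^[n] x) := by
  set r : ℝ := a + b with hr
  have hr0 : 0 ≤ r := by positivity
  have hr1 : r < 1 := hab
  -- the key step lemma
  have key : ∀ m : ℕ,
      max (dist (f^[m+2] x) (f^[m+3] x)) (dist (f^[m+3] x) (f^[m+4] x))
        ≤ r * max (dist (f^[m] x) (f^[m+1] x)) (dist (f^[m+1] x) (f^[m+2] x)) := by
    intro m
    set Y := max (dist (f^[m] x) (f^[m+1] x)) (dist (f^[m+1] x) (f^[m+2] x)) with hY
    have hY0 : 0 ≤ Y := le_trans dist_nonneg (le_max_left _ _)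
    have h1 : dist (f^[m+2] x) (f^[m+3] x) ≤ r * Y := by
      have h := hcc (f^[m] x) (f^[m+1] x)
      simp only [← Function.iterate_succ_apply' f] at h
      calc dist (f^[m+2] x) (f^[m+3] x)
          ≤ a * dist (f^[m+1] x) (f^[m+2] x) + b * dist (f^[m] x) (f^[m+1] x) := by
            convert h using 3 <;> try ring
        _ ≤ a * Y + b * Y := by
            gcongr
            · exact le_max_right _ _
            · exact le_max_left _ _
        _ = r * Y := by ring
    have h2 : dist (f^[m+3] x) (f^[m+4] x) ≤ r * Y := by
      have h := hcc (f^[m+1] x) (f^[m+2] x)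
      simp only [← Function.iterate_succ_apply' f] at h
      calc dist (f^[m+3] x) (f^[m+4] x)
          ≤ a * dist (f^[m+2] x) (f^[m+3] x) + b * dist (f^[m+1] x) (f^[m+2] x) := by
            convert h using 3 <;> try ring
        _ ≤ a * (r * Y) + b * Y := by
            gcongr
            try exact le_max_right _ _
        _ ≤ a * (1 * Y) + b * Y := by gcongr; try exact hr1.le
        _ = r * Y := by ring
    exact max_le h1 h2
  refine ⟨?_, ?_⟩
  · intro n hn
    obtain ⟨m, rfl⟩ := Nat.exists_eq_add_of_le hn
    simp only [show 1 + m = m + 1 from by omega, show m + 1 + 2 - 1 = m + 2 from by omega,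
      show m + 1 + 2 = m + 3 from by omega, show m + 3 + 1 = m + 4 from by omega,
      show m + 1 - 1 = m from by omega, show m + 1 + 1 = m + 2 from by omega]
    exact key m
  · -- Cauchy sequence
    set s : ℝ := Real.sqrt r with hs
    have hs0 : 0 ≤ s := Real.sqrt_nonneg r
    have hs1 : s < 1 := by
      rw [hs, show (1:ℝ) = Real.sqrt 1 by simp]
      exact Real.sqrt_lt_sqrt hr0 hr1
    have hssq : s ^ 2 = r := Real.sq_sqrt hr0
    set Y : ℕ → ℝ := fun n =>
      max (dist (f^[n] x) (f^[n+1] x)) (dist (f^[n+1] x) (f^[n+2] x)) with hYdef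
    have hY0 : ∀ n, 0 ≤ Y n := fun n => le_trans dist_nonneg (le_max_left _ _)
    have hkey : ∀ m, Y (m + 2) ≤ r * Y m := fun m => key m
    have hiter : ∀ k, Y (2*k) ≤ r ^ k * Y 0 ∧ Y (2*k+1) ≤ r ^ k * Y 1 := by
      intro k
      induction k with
      | zero => simp
      | succ k ih =>
        constructor
        · rw [show 2*(k+1) = 2*k + 2 from by omega]
          calc Y (2*k+2) ≤ r * Y (2*k) := hkey _
            _ ≤ r * (r ^ k * Y 0) := by gcongr; exact ih.1
            _ = r ^ (k+1) * Y 0 := by ring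
        · rw [show 2*(k+1)+1 = (2*k+1) + 2 from by omega]
          calc Y (2*k+1+2) ≤ r * Y (2*k+1) := hkey _
            _ ≤ r * (r ^ k * Y 1) := by gcongr; exact ih.2
            _ = r ^ (k+1) * Y 1 := by ring
    set M : ℝ := max (Y 0) (Y 1) with hM
    have hM0 : 0 ≤ M := le_trans (hY0 0) (le_max_left _ _)
    have hs2le : s ^ 2 ≤ 1 := by
      rw [hssq]; exact hr1.le
    have hbound : ∀ n : ℕ, dist (f^[n+2] x) (f^[n+2+1] x) ≤ M * s ^ n := by
      intro n
      have hd : dist (f^[n+2] x) (f^[n+2+1] x) ≤ Y (n+2) := le_max_left _ _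
      rcases Nat.even_or_odd n with ⟨k, hk⟩ | ⟨k, hk⟩
      · -- n = k + k
        have h1 : Y (n+2) ≤ r ^ (k+1) * Y 0 := by
          rw [show n + 2 = 2*(k+1) from by omega]
          exact (hiter (k+1)).1
        calc dist (f^[n+2] x) (f^[n+2+1] x) ≤ Y (n+2) := hd
          _ ≤ r ^ (k+1) * Y 0 := h1
          _ ≤ r ^ (k+1) * M := by gcongr; exact le_max_left _ _
          _ = M * (s^2)^(k+1) := by rw [hssq]; ring
          _ = M * (s ^ n * s ^ 2) := by
              rw [← pow_mul, ← pow_add, show n + 2 = 2*(k+1) from by omega]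
          _ ≤ M * (s ^ n * 1) := by gcongr
          _ = M * s ^ n := by ring
      · -- n = 2k + 1
        have h1 : Y (n+2) ≤ r ^ (k+1) * Y 1 := by
          rw [show n + 2 = 2*(k+1) + 1 from by omega]
          exact (hiter (k+1)).2
        calc dist (f^[n+2] x) (f^[n+2+1] x) ≤ Y (n+2) := hd
          _ ≤ r ^ (k+1) * Y 1 := h1
          _ ≤ r ^ (k+1) * M := by gcongr; exact le_max_right _ _
          _ = M * (s^2)^(k+1) := by rw [hssq]; ring
          _ = M * (s ^ n * s) := by
              rw [← pow_mul, ← pow_succ, show n + 1 = 2*(k+1) from by omega]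
          _ ≤ M * (s ^ n * 1) := by gcongr; try exact hs1.le
          _ = M * s ^ n := by ring
    have hc2 : CauchySeq (fun n : ℕ => f^[n+2] x) :=
      cauchySeq_of_le_geometric s M hs1 hbound
    exact (cauchySeq_shift 2).mp hc2
end

section
/- There exists a continuous map f : ℝ → ℝ (with the usual metric) that is a convex contraction but not a contraction; i.e., there exist a, b ∈ (0,1) with a + b < 1 and |f(f(x)) − f(f(y))| ≤ a·|f(x) − f(y)| + b·|x − y| for all x,y, yet there is no constant c < 1 with |f(x) − f(y)| ≤ c·|x − y| for all x, y. -/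
/-- There is a continuous self-map of `ℝ` which is a convex contraction but not a
contraction. -/
theorem exists_convex_contraction_not_contraction :
    ∃ f : ℝ → ℝ, Continuous f ∧
      (∃ a b : ℝ, a ∈ Set.Ioo (0 : ℝ) 1 ∧ b ∈ Set.Ioo (0 : ℝ) 1 ∧ a + b < 1 ∧
        ∀ x y : ℝ, |f (f x) - f (f y)| ≤ a * |f x - f y| + b * |x - y|) ∧
      ¬ ∃ c : ℝ, 0 ≤ c ∧ c < 1 ∧ ∀ x y : ℝ, |f x - f y| ≤ c * |x - y| := by
  refine ⟨fun x => 1 + max 0 (min x 1), ?_, ?_, ?_⟩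
  · fun_prop
  · have hff : ∀ x : ℝ, (fun x : ℝ => 1 + max 0 (min x 1))
        ((fun x : ℝ => 1 + max 0 (min x 1)) x) = 2 := by
      intro x
      have h1 : (1 : ℝ) ≤ 1 + max 0 (min x 1) := by
        have := le_max_left (0 : ℝ) (min x 1); linarith
      simp only
      rw [min_eq_right h1, max_eq_right (by norm_num : (0:ℝ) ≤ 1)]
      norm_num
    refine ⟨1/4, 1/4, by norm_num, by norm_num, by norm_num, fun x y => ?_⟩
    rw [hff x, hff y]
    simp only [sub_self, abs_zero]
    positivity
  · rintro ⟨c, hc0, hc1, h⟩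
    have := h 0 1
    simp only at this
    rw [min_self, max_eq_right (by norm_num : (0:ℝ) ≤ 1),
      min_eq_left (by norm_num : (0:ℝ) ≤ 1), max_self] at this
    norm_num at this
    linarith
end

section
/- Let S = ((X,d), (f_i)_{i∈I}) be an iterated function system consisting of convex contractions on a nonempty complete metric space with I finite and nonempty. Then there exists a unique nonempty compact set A ⊆ X such that for every nonempty compact B ⊆ X, the iterates F_S^[n](B) converge to A in the Hausdorff metric, where F_S(B) = ⋃_{i∈I} f_i(B). -/
open Set Function EMetric Filter ENNReal Topology

namespace IFSCC

variable {X : Type*} [MetricSpace X] {I : Type*}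

/-- Composition of the maps along a word. -/
def wcomp (f : I → X → X) : List I → X → X
  | [] => id
  | i :: w => f i ∘ wcomp f w

lemma iterate_eq (f : I → X → X) (n : ℕ) (B : Set X) :
    (fun C : Set X => ⋃ i, f i '' C)^[n] B
      = ⋃ w ∈ {l : List I | l.length = n}, wcomp f w '' B := by
  induction n with
  | zero => simp [List.length_eq_zero_iff, wcomp]
  | succ n ih =>
    rw [Function.iterate_succ_apply', ih]
    ext x
    simp only [mem_iUnion, mem_setOf_eq, exists_prop, mem_image]
    constructor
    · rintro ⟨i, y, ⟨w, hw, z, hz, rfl⟩, rfl⟩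
      exact ⟨i :: w, by simp [hw], z, hz, rfl⟩
    · rintro ⟨l, hl, z, hz, rfl⟩
      match l, hl with
      | i :: w, hl =>
        exact ⟨i, wcomp f w z, ⟨w, by simpa using hl, z, hz, rfl⟩, rfl⟩

lemma diam_pair {f : I → X → X} {a b c : I → I → ℝ} {q : ℝ}
    (ha : ∀ i j, 0 ≤ a i j) (hb : ∀ i j, 0 ≤ b i j) (hc : ∀ i j, 0 ≤ c i j)
    (hq : ∀ i j, a i j + b i j + c i j ≤ q)
    (hcc : ∀ i j (x y : X),
      dist (f i (f j x)) (f i (f j y)) ≤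
        a i j * dist x y + b i j * dist (f i x) (f i y) + c i j * dist (f j x) (f j y))
    (i j : I) (T : Set X) :
    diam (f i '' (f j '' T)) ≤ ENNReal.ofReal q *
      max (diam T) (max (diam (f i '' T)) (diam (f j '' T))) := by
  set m : ℝ≥0∞ := max (diam T) (max (diam (f i '' T)) (diam (f j '' T))) with hm
  apply diam_le
  rintro u ⟨x', ⟨x, hx, rfl⟩, rfl⟩ v ⟨y', ⟨y, hy, rfl⟩, rfl⟩
  have e0 : edist x y ≤ m := le_trans (edist_le_diam_of_mem hx hy) (le_max_left _ _)
  have e1 : edist (f i x) (f i y) ≤ m :=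
    le_trans (edist_le_diam_of_mem (mem_image_of_mem _ hx) (mem_image_of_mem _ hy))
      (le_trans (le_max_left _ _) (le_max_right _ _))
  have e2 : edist (f j x) (f j y) ≤ m :=
    le_trans (edist_le_diam_of_mem (mem_image_of_mem _ hx) (mem_image_of_mem _ hy))
      (le_trans (le_max_right _ _) (le_max_right _ _))
  calc edist (f i (f j x)) (f i (f j y))
      = ENNReal.ofReal (dist (f i (f j x)) (f i (f j y))) := edist_dist _ _
    _ ≤ ENNReal.ofReal (a i j * dist x y + b i j * dist (f i x) (f i y)
          + c i j * dist (f j x) (f j y)) := ENNReal.ofReal_le_ofReal (hcc i j x y)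
    _ = ENNReal.ofReal (a i j) * edist x y + ENNReal.ofReal (b i j) * edist (f i x) (f i y)
          + ENNReal.ofReal (c i j) * edist (f j x) (f j y) := by
        rw [ENNReal.ofReal_add (add_nonneg (mul_nonneg (ha i j) dist_nonneg)
            (mul_nonneg (hb i j) dist_nonneg)) (mul_nonneg (hc i j) dist_nonneg),
          ENNReal.ofReal_add (mul_nonneg (ha i j) dist_nonneg)
            (mul_nonneg (hb i j) dist_nonneg),
          ENNReal.ofReal_mul (ha i j), ENNReal.ofReal_mul (hb i j),
          ENNReal.ofReal_mul (hc i j), edist_dist, edist_dist, edist_dist]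
    _ ≤ ENNReal.ofReal (a i j) * m + ENNReal.ofReal (b i j) * m
          + ENNReal.ofReal (c i j) * m := by gcongr
    _ = ENNReal.ofReal (a i j + b i j + c i j) * m := by
        rw [ENNReal.ofReal_add (add_nonneg (ha i j) (hb i j)) (hc i j),
          ENNReal.ofReal_add (ha i j) (hb i j)]
        ring
    _ ≤ ENNReal.ofReal q * m :=
        mul_le_mul_left (ENNReal.ofReal_le_ofReal (hq i j)) m

/-- Maximal diameter of word-images of length `n`. -/
noncomputable def M (f : I → X → X) (S : Set X) (n : ℕ) : ℝ≥0∞ :=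
  ⨆ w : {l : List I // l.length = n}, diam (wcomp f w.1 '' S)

lemma diam_le_M {f : I → X → X} {S : Set X} {n : ℕ} {w : List I} (hw : w.length = n) :
    diam (wcomp f w '' S) ≤ M f S n :=
  le_iSup (fun w : {l : List I // l.length = n} => diam (wcomp f w.1 '' S)) ⟨w, hw⟩

lemma M_zero_le (f : I → X → X) (S : Set X) : M f S 0 ≤ diam S := by
  apply iSup_le
  rintro ⟨l, hl⟩
  rw [List.length_eq_zero_iff] at hl
  subst hl
  simp [wcomp]

lemma M_one_le (f : I → X → X) (S : Set X) : M f S 1 ≤ diam (⋃ i, f i '' S) := by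
  apply iSup_le
  rintro ⟨l, hl⟩
  match l, hl with
  | [i], _ =>
    refine diam_mono ?_
    have : wcomp f [i] '' S = f i '' S := by
      simp [wcomp, Set.image_comp]
    rw [this]
    exact subset_iUnion_of_subset i le_rfl

variable {f : I → X → X} {a b c : I → I → ℝ} {q : ℝ}

lemma M_step
    (ha : ∀ i j, 0 ≤ a i j) (hb : ∀ i j, 0 ≤ b i j) (hc : ∀ i j, 0 ≤ c i j)
    (hq : ∀ i j, a i j + b i j + c i j ≤ q)
    (hcc : ∀ i j (x y : X),
      dist (f i (f j x)) (f i (f j y)) ≤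
        a i j * dist x y + b i j * dist (f i x) (f i y) + c i j * dist (f j x) (f j y))
    (S : Set X) (n : ℕ) :
    M f S (n + 2) ≤ ENNReal.ofReal q * max (M f S (n + 1)) (M f S n) := by
  apply iSup_le
  rintro ⟨l, hl⟩
  match l, hl with
  | i :: j :: w, hl =>
    have hw : w.length = n := by simpa using hl
    have himg : wcomp f (i :: j :: w) '' S = f i '' (f j '' (wcomp f w '' S)) := by
      simp [wcomp, Set.image_image]
    rw [himg]
    refine le_trans (diam_pair ha hb hc hq hcc i j (wcomp f w '' S)) ?_
    refine mul_le_mul_right ?_ _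
    have h0 : diam (wcomp f w '' S) ≤ M f S n := diam_le_M hw
    have h1 : diam (f i '' (wcomp f w '' S)) ≤ M f S (n + 1) := by
      have : f i '' (wcomp f w '' S) = wcomp f (i :: w) '' S := by
        simp [wcomp, Set.image_image]
      rw [this]; exact diam_le_M (by simp [hw])
    have h2 : diam (f j '' (wcomp f w '' S)) ≤ M f S (n + 1) := by
      have : f j '' (wcomp f w '' S) = wcomp f (j :: w) '' S := by
        simp [wcomp, Set.image_image]
      rw [this]; exact diam_le_M (by simp [hw])
    exact max_le (h0.trans (le_max_right _ _))
      (max_le (h1.trans (le_max_left _ _)) (h2.trans (le_max_left _ _)))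

lemma M_le
    (ha : ∀ i j, 0 ≤ a i j) (hb : ∀ i j, 0 ≤ b i j) (hc : ∀ i j, 0 ≤ c i j)
    (hq : ∀ i j, a i j + b i j + c i j ≤ q) (hq1 : q ≤ 1)
    (hcc : ∀ i j (x y : X),
      dist (f i (f j x)) (f i (f j y)) ≤
        a i j * dist x y + b i j * dist (f i x) (f i y) + c i j * dist (f j x) (f j y))
    (S : Set X) : ∀ n : ℕ,
    M f S n ≤ ENNReal.ofReal q ^ (n / 2) * max (M f S 0) (M f S 1) := by
  have hQ1 : ENNReal.ofReal q ≤ 1 := ENNReal.ofReal_le_one.2 hq1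
  intro n
  induction n using Nat.strong_induction_on with
  | _ n ih =>
    match n with
    | 0 => simpa using le_max_left _ _
    | 1 => simpa using le_max_right _ _
    | (n + 2) =>
      have key := M_step ha hb hc hq hcc S n
      refine key.trans ?_
      have hmax : max (M f S (n + 1)) (M f S n)
          ≤ ENNReal.ofReal q ^ (n / 2) * max (M f S 0) (M f S 1) := by
        refine max_le ((ih (n+1) (by omega)).trans ?_) ((ih n (by omega)).trans ?_)
        · exact mul_le_mul_left (pow_le_pow_right_of_le_one' hQ1 (by omega)) _
        · exact le_rfl
      calc ENNReal.ofReal q * max (M f S (n + 1)) (M f S n)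
          ≤ ENNReal.ofReal q * (ENNReal.ofReal q ^ (n / 2) * max (M f S 0) (M f S 1)) :=
            mul_le_mul_right hmax _
        _ = ENNReal.ofReal q ^ ((n + 2) / 2) * max (M f S 0) (M f S 1) := by
            rw [← mul_assoc, ← pow_succ']
            congr 2
            omega

/-- The Hausdorff distance between iterates from two starting sets is controlled
by the maximal word diameter on the union. -/
lemma hausdorffEdist_iterate_le (f : I → X → X) {B C : Set X}
    (hB : B.Nonempty) (hC : C.Nonempty) (n : ℕ) :
    hausdorffEdist ((fun C : Set X => ⋃ i, f i '' C)^[n] B)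
        ((fun C : Set X => ⋃ i, f i '' C)^[n] C) ≤ M f (B ∪ C) n := by
  rw [iterate_eq, iterate_eq]
  apply hausdorffEdist_le_of_mem_edist
  · rintro x hx
    simp only [mem_iUnion, mem_setOf_eq, exists_prop, mem_image] at hx
    obtain ⟨w, hw, z, hz, rfl⟩ := hx
    obtain ⟨z', hz'⟩ := hC
    refine ⟨wcomp f w z', by
      simp only [mem_iUnion, mem_setOf_eq, exists_prop, mem_image]
      exact ⟨w, hw, z', hz', rfl⟩, ?_⟩
    refine le_trans (edist_le_diam_of_mem ?_ ?_) (diam_le_M hw)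
    · exact mem_image_of_mem _ (Or.inl hz)
    · exact mem_image_of_mem _ (Or.inr hz')
  · rintro x hx
    simp only [mem_iUnion, mem_setOf_eq, exists_prop, mem_image] at hx
    obtain ⟨w, hw, z, hz, rfl⟩ := hx
    obtain ⟨z', hz'⟩ := hB
    refine ⟨wcomp f w z', by
      simp only [mem_iUnion, mem_setOf_eq, exists_prop, mem_image]
      exact ⟨w, hw, z', hz', rfl⟩, ?_⟩
    refine le_trans (edist_le_diam_of_mem ?_ ?_) (diam_le_M hw)
    · exact mem_image_of_mem _ (Or.inr hz)
    · exact mem_image_of_mem _ (Or.inl hz')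

end IFSCC

/-- An iterated function system consisting of convex contractions has a unique
attractor, to which the iterates of the associated set function converge from any
nonempty compact set, in the Hausdorff metric. -/
theorem IFS_convex_contractions_attractor
    {X : Type*} [MetricSpace X] [CompleteSpace X] [Nonempty X]
    {I : Type*} [Finite I] [Nonempty I]
    (f : I → X → X) (hf : ∀ i, Continuous (f i))
    (a b c : I → I → ℝ)
    (ha : ∀ i j, 0 ≤ a i j) (hb : ∀ i j, 0 ≤ b i j) (hc : ∀ i j, 0 ≤ c i j)
    (hd : ∀ i j, a i j + b i j + c i j < 1)
    (hcc : ∀ i j (x y : X),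
      dist (f i (f j x)) (f i (f j y)) ≤
        a i j * dist x y + b i j * dist (f i x) (f i y) + c i j * dist (f j x) (f j y)) :
    ∃! A : Set X, A.Nonempty ∧ IsCompact A ∧
      ∀ B : Set X, B.Nonempty → IsCompact B →
        Filter.Tendsto
          (fun n : ℕ => EMetric.hausdorffEdist ((fun C : Set X => ⋃ i, f i '' C)^[n] B) A)
          Filter.atTop (nhds 0) := by
  classical
  have := Fintype.ofFinite I
  set F : Set X → Set X := fun C : Set X => ⋃ i, f i '' C with hF
  -- the uniform contraction constant
  set q : ℝ := max ((Finset.univ : Finset (I × I)).sup'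
      (Finset.univ_nonempty) (fun p => a p.1 p.2 + b p.1 p.2 + c p.1 p.2)) (1/2) with hqdef
  have hq : ∀ i j, a i j + b i j + c i j ≤ q := fun i j =>
    le_trans (Finset.le_sup' (fun p : I × I => a p.1 p.2 + b p.1 p.2 + c p.1 p.2)
      (Finset.mem_univ (i, j))) (le_max_left _ _)
  have hq1 : q < 1 := by
    apply max_lt _ (by norm_num)
    rw [Finset.sup'_lt_iff]
    exact fun p _ => hd p.1 p.2
  have hqhalf : (1/2 : ℝ) ≤ q := le_max_right _ _
  have hq0 : 0 < q := lt_of_lt_of_le (by norm_num) hqhalf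
  set Q : ℝ≥0∞ := ENNReal.ofReal q with hQdef
  set r : ℝ≥0∞ := ENNReal.ofReal (Real.sqrt q) with hrdef
  have hr1 : r < 1 := by
    rw [hrdef]
    apply ENNReal.ofReal_lt_one.2
    nlinarith [Real.sq_sqrt hq0.le, Real.sqrt_nonneg q]
  have hr0 : r ≠ 0 := by
    rw [hrdef]
    simp only [ne_eq, ENNReal.ofReal_eq_zero, not_le]
    exact Real.sqrt_pos.2 hq0
  have hrt : r ≠ ⊤ := ENNReal.ofReal_ne_top
  have hQr : Q = r ^ 2 := by
    rw [hrdef, hQdef, ← ENNReal.ofReal_pow (Real.sqrt_nonneg q), Real.sq_sqrt hq0.le]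
  -- key power estimate : `Q ^ (n / 2) ≤ r⁻¹ * r ^ n`
  have hpow : ∀ n : ℕ, Q ^ (n / 2) ≤ r⁻¹ * r ^ n := by
    intro n
    rw [hQr, ← pow_mul, ← ENNReal.div_eq_inv_mul,
      ENNReal.le_div_iff_mul_le (Or.inl hr0) (Or.inl hrt)]
    calc r ^ (2 * (n / 2)) * r = r ^ (2 * (n / 2) + 1) := (pow_succ _ _).symm
      _ ≤ r ^ n := pow_le_pow_right_of_le_one' hr1.le (by omega)
  -- compactness and nonemptiness of the iterates
  have hFcomp : ∀ {B : Set X}, IsCompact B → IsCompact (F B) := fun hB =>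
    isCompact_iUnion (fun i => hB.image (hf i))
  have hFne : ∀ {B : Set X}, B.Nonempty → (F B).Nonempty := by
    intro B hB
    have i := Classical.arbitrary I
    exact ⟨f i hB.choose, mem_iUnion.2 ⟨i, mem_image_of_mem _ hB.choose_spec⟩⟩
  have hiter : ∀ (B : Set X), B.Nonempty → IsCompact B → ∀ n : ℕ,
      (F^[n] B).Nonempty ∧ IsCompact (F^[n] B) := by
    intro B hB hBc n
    induction n with
    | zero => exact ⟨hB, hBc⟩
    | succ n ih =>
      rw [Function.iterate_succ_apply']
      exact ⟨hFne ih.1, hFcomp ih.2⟩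
  -- finiteness of the word-diameter constants
  have hCfin : ∀ (S : Set X), IsCompact S →
      max (IFSCC.M f S 0) (IFSCC.M f S 1) ≠ ⊤ := by
    intro S hS
    apply ne_top_of_le_ne_top (b := max (diam S) (diam (F S)))
    · rw [ne_eq, max_eq_top, not_or]
      exact ⟨hS.isBounded.ediam_ne_top, (hFcomp hS).isBounded.ediam_ne_top⟩
    · exact max_le_max (IFSCC.M_zero_le f S) (IFSCC.M_one_le f S)
  -- the master geometric estimate between iterates from two starting sets
  have master : ∀ (B C : Set X), B.Nonempty → C.Nonempty → IsCompact B → IsCompact C →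
      ∃ K : ℝ≥0∞, K ≠ ⊤ ∧ ∀ n : ℕ,
        hausdorffEdist (F^[n] B) (F^[n] C) ≤ K * r ^ n := by
    intro B C hB hC hBc hCc
    set mBC := max (IFSCC.M f (B ∪ C) 0) (IFSCC.M f (B ∪ C) 1) with hmBC
    refine ⟨r⁻¹ * mBC, ENNReal.mul_ne_top (ENNReal.inv_ne_top.2 hr0)
      (hCfin _ (hBc.union hCc)), fun n => ?_⟩
    calc hausdorffEdist (F^[n] B) (F^[n] C) ≤ IFSCC.M f (B ∪ C) n :=
          IFSCC.hausdorffEdist_iterate_le f hB hC n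
      _ ≤ Q ^ (n / 2) * mBC := IFSCC.M_le ha hb hc hq hq1.le hcc _ n
      _ ≤ (r⁻¹ * r ^ n) * mBC := mul_le_mul_left (hpow n) _
      _ = (r⁻¹ * mBC) * r ^ n := by ring
  -- the Cauchy sequence of iterates from a singleton
  obtain ⟨x₀⟩ := ‹Nonempty X›
  set B₀ : Set X := {x₀} with hB₀def
  have hB₀ : B₀.Nonempty := singleton_nonempty _
  have hB₀c : IsCompact B₀ := isCompact_singleton
  obtain ⟨K₀, hK₀, hbound⟩ := master B₀ (F B₀) hB₀ (hFne hB₀) hB₀c (hFcomp hB₀c)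
  set u : ℕ → TopologicalSpace.NonemptyCompacts X := fun n =>
    ⟨⟨F^[n] B₀, (hiter B₀ hB₀ hB₀c n).2⟩, (hiter B₀ hB₀ hB₀c n).1⟩ with hu
  have hedist_u : ∀ n : ℕ, ∀ s : TopologicalSpace.NonemptyCompacts X,
      edist (u n) s = hausdorffEdist (F^[n] B₀) (s : Set X) := fun n s => rfl
  have hbound' : ∀ n : ℕ, edist (u n) (u (n + 1)) ≤ K₀ * r ^ n := by
    intro n
    rw [hedist_u]
    have : (u (n + 1) : Set X) = F^[n] (F B₀) := by
      show F^[n + 1] B₀ = _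
      rw [Function.iterate_succ_apply]
    rw [this]
    exact hbound n
  have hcauchy : CauchySeq u := cauchySeq_of_edist_le_geometric r K₀ hr1 hK₀ hbound'
  obtain ⟨A, hA⟩ := cauchySeq_tendsto_of_complete hcauchy
  have hdistA : ∀ n : ℕ, hausdorffEdist (F^[n] B₀) (A : Set X) ≤ K₀ * r ^ n / (1 - r) := by
    intro n
    rw [← hedist_u]
    exact edist_le_of_edist_le_geometric_of_tendsto r K₀ hbound' hA n
  have h1r : (1 : ℝ≥0∞) - r ≠ 0 := by
    rw [ne_eq, tsub_eq_zero_iff_le, not_le]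
    exact hr1
  -- the convergence property of `A`
  have hconv : ∀ B : Set X, B.Nonempty → IsCompact B →
      Tendsto (fun n : ℕ => hausdorffEdist (F^[n] B) (A : Set X)) atTop (𝓝 0) := by
    intro B hBne hBc
    obtain ⟨K, hK, hKb⟩ := master B B₀ hBne hB₀ hBc hB₀c
    have hle : ∀ n : ℕ, hausdorffEdist (F^[n] B) (A : Set X)
        ≤ K * r ^ n + K₀ * r ^ n / (1 - r) := fun n =>
      le_trans (hausdorffEdist_triangle (t := F^[n] B₀))
        (add_le_add (hKb n) (hdistA n))
    have hgeo := ENNReal.tendsto_pow_atTop_nhds_zero_of_lt_one hr1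
    have t1 : Tendsto (fun n : ℕ => K * r ^ n) atTop (𝓝 0) := by
      simpa using ENNReal.Tendsto.const_mul hgeo (Or.inr hK)
    have t2 : Tendsto (fun n : ℕ => K₀ * r ^ n / (1 - r)) atTop (𝓝 0) := by
      have heq : ∀ n : ℕ, K₀ * r ^ n / (1 - r) = (K₀ * (1 - r)⁻¹) * r ^ n := by
        intro n
        rw [div_eq_mul_inv]
        ring
      simp only [heq]
      simpa using ENNReal.Tendsto.const_mul hgeo
        (Or.inr (ENNReal.mul_ne_top hK₀ (ENNReal.inv_ne_top.2 h1r)))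
    have hsum : Tendsto (fun n : ℕ => K * r ^ n + K₀ * r ^ n / (1 - r)) atTop (𝓝 0) := by
      simpa using t1.add t2
    exact tendsto_of_tendsto_of_tendsto_of_le_of_le tendsto_const_nhds hsum
      (fun n => zero_le) hle
  -- conclusion
  refine ⟨(A : Set X), ⟨A.nonempty, A.isCompact, hconv⟩, ?_⟩
  rintro A' ⟨hA'ne, hA'c, hconv'⟩
  have g1 := hconv' (A : Set X) A.nonempty A.isCompact
  have g2 := hconv (A : Set X) A.nonempty A.isCompact
  have hzero : hausdorffEdist A' (A : Set X) = 0 := by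
    have hle : ∀ n : ℕ, hausdorffEdist A' (A : Set X)
        ≤ hausdorffEdist (F^[n] (A : Set X)) A' + hausdorffEdist (F^[n] (A : Set X)) (A : Set X) := by
      intro n
      calc hausdorffEdist A' (A : Set X)
          ≤ hausdorffEdist A' (F^[n] (A : Set X))
            + hausdorffEdist (F^[n] (A : Set X)) (A : Set X) := hausdorffEdist_triangle
        _ = hausdorffEdist (F^[n] (A : Set X)) A'
            + hausdorffEdist (F^[n] (A : Set X)) (A : Set X) := by
            show Metric.hausdorffEDist A' _ + _ = Metric.hausdorffEDist _ A' + _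
            rw [Metric.hausdorffEDist_comm (s := A')]
    have : Tendsto (fun n : ℕ => hausdorffEdist (F^[n] (A : Set X)) A'
        + hausdorffEdist (F^[n] (A : Set X)) (A : Set X)) atTop (𝓝 0) := by
      simpa using g1.add g2
    exact le_antisymm (ge_of_tendsto' this hle) zero_le
  exact hausdorffEdist_zero_iff_eq_of_closed hA'c.isClosed A.isCompact.isClosed |>.1 hzero
end

section
/- Let S = ((X,d), (f_i)_{i∈I}) be an iterated function system consisting of convex contractions. The associated set function F_S maps nonempty compact subsets to nonempty compact subsets and has a fixed point A ∈ 𝒦(X); moreover this fixed point is unique: if F_S(A₁) = A₁ for A₁ ∈ 𝒦(X), then A₁ = A. -/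
open Metric Filter Topology

namespace IFSAux

variable {X : Type*} [MetricSpace X] {I : Type*}

/-- Composition of the maps of an IFS along a word. -/
def comp (f : I → X → X) : List I → X → X
  | [] => id
  | i :: w => f i ∘ comp f w

lemma comp_concat (f : I → X → X) (i : I) (w : List I) (x : X) :
    comp f (w ++ [i]) x = comp f w (f i x) := by
  induction w with
  | nil => rfl
  | cons j w ih => exact congrArg (f j) ih

/-- Key pointwise contraction estimate along words. -/
lemma key (f : I → X → X) (a b c : I → I → ℝ)
    (ha : ∀ i j, 0 ≤ a i j) (hb : ∀ i j, 0 ≤ b i j) (hc : ∀ i j, 0 ≤ c i j)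
    (hcc : ∀ i j (x y : X),
      dist (f i (f j x)) (f i (f j y)) ≤
        a i j * dist x y + b i j * dist (f i x) (f i y) + c i j * dist (f j x) (f j y))
    (α : ℝ) (hα0 : 0 ≤ α) (hα1 : α ≤ 1)
    (hsum : ∀ i j, a i j + b i j + c i j ≤ α)
    (D : X → X → ℝ)
    (hDd : ∀ x y, dist x y ≤ D x y)
    (hDf : ∀ i (x y : X), dist (f i x) (f i y) ≤ D x y) :
    ∀ (n : ℕ) (w : List I), w.length = n → ∀ x y : X,
      dist (comp f w x) (comp f w y) ≤ α ^ (n / 2) * D x y := by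
  intro n
  induction n using Nat.strong_induction_on with
  | _ n ih =>
    intro w hw x y
    have hD0 : 0 ≤ D x y := le_trans dist_nonneg (hDd x y)
    match w with
    | [] =>
      simp only [List.length_nil] at hw
      subst hw
      simpa [comp] using hDd x y
    | [i] =>
      simp only [List.length_cons, List.length_nil] at hw
      subst hw
      simpa [comp] using hDf i x y
    | i :: j :: w =>
      simp only [List.length_cons] at hw
      subst hw
      have hpow : α ^ ((w.length + 1) / 2) ≤ α ^ (w.length / 2) :=
        pow_le_pow_of_le_one hα0 hα1 (Nat.div_le_div_right (Nat.le_succ _))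
    -- induction hypotheses
      have h0 : dist (comp f w x) (comp f w y) ≤ α ^ (w.length / 2) * D x y :=
        ih w.length (by omega) w rfl x y
      have h1 : dist (f i (comp f w x)) (f i (comp f w y)) ≤ α ^ (w.length / 2) * D x y := by
        have := ih (w.length + 1) (by omega) (i :: w) rfl x y
        exact le_trans this (mul_le_mul_of_nonneg_right hpow hD0)
      have h2 : dist (f j (comp f w x)) (f j (comp f w y)) ≤ α ^ (w.length / 2) * D x y := by
        have := ih (w.length + 1) (by omega) (j :: w) rfl x y
        exact le_trans this (mul_le_mul_of_nonneg_right hpow hD0)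
      have hmain := hcc i j (comp f w x) (comp f w y)
      have hexp : (w.length + 1 + 1) / 2 = w.length / 2 + 1 := by omega
      calc dist (comp f (i :: j :: w) x) (comp f (i :: j :: w) y)
          = dist (f i (f j (comp f w x))) (f i (f j (comp f w y))) := rfl
        _ ≤ a i j * dist (comp f w x) (comp f w y)
            + b i j * dist (f i (comp f w x)) (f i (comp f w y))
            + c i j * dist (f j (comp f w x)) (f j (comp f w y)) := hmain
        _ ≤ a i j * (α ^ (w.length / 2) * D x y) + b i j * (α ^ (w.length / 2) * D x y)
            + c i j * (α ^ (w.length / 2) * D x y) := by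
            have t0 := mul_le_mul_of_nonneg_left h0 (ha i j)
            have t1 := mul_le_mul_of_nonneg_left h1 (hb i j)
            have t2 := mul_le_mul_of_nonneg_left h2 (hc i j)
            linarith
        _ = (a i j + b i j + c i j) * (α ^ (w.length / 2) * D x y) := by ring
        _ ≤ α * (α ^ (w.length / 2) * D x y) := by
            apply mul_le_mul_of_nonneg_right (hsum i j)
            positivity
        _ = α ^ ((w.length + 1 + 1) / 2) * D x y := by
            rw [hexp, pow_succ]; ring

lemma mem_iterate_iff (f : I → X → X) (B : Set X) (n : ℕ) (x : X) :
    x ∈ (fun S => ⋃ i, f i '' S)^[n] B ↔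
      ∃ w : List I, w.length = n ∧ ∃ y ∈ B, comp f w y = x := by
  induction n generalizing x with
  | zero =>
    simp only [Function.iterate_zero, id_eq, List.length_eq_zero_iff]
    constructor
    · intro hx; exact ⟨[], rfl, x, hx, rfl⟩
    · rintro ⟨w, rfl, y, hy, rfl⟩; exact hy
  | succ n ih =>
    rw [Function.iterate_succ_apply']
    constructor
    · intro hx
      simp only [Set.mem_iUnion, Set.mem_image] at hx
      obtain ⟨i, z, hz, rfl⟩ := hx
      obtain ⟨w, hwl, y, hy, rfl⟩ := (ih z).mp hz
      exact ⟨i :: w, by simp [hwl], y, hy, rfl⟩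
    · rintro ⟨w, hwl, y, hy, rfl⟩
      cases w with
      | nil => simp at hwl
      | cons i w =>
        simp only [Set.mem_iUnion, Set.mem_image]
        refine ⟨i, comp f w y, (ih _).mpr ⟨w, by simpa using hwl, y, hy, rfl⟩, rfl⟩

end IFSAux

/-- The set function of an IFS consisting of convex contractions maps nonempty compact
sets to nonempty compact sets and has a unique fixed point in the hyperspace of
nonempty compact sets. -/
theorem IFS_convex_contractions_set_function_unique_fixed_point
    {X : Type*} [MetricSpace X] [CompleteSpace X] [Nonempty X]
    {I : Type*} [Finite I] [Nonempty I]
    (f : I → X → X) (hf : ∀ i, Continuous (f i))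
    (a b c : I → I → ℝ)
    (ha : ∀ i j, 0 ≤ a i j) (hb : ∀ i j, 0 ≤ b i j) (hc : ∀ i j, 0 ≤ c i j)
    (hd : ∀ i j, a i j + b i j + c i j < 1)
    (hcc : ∀ i j (x y : X),
      dist (f i (f j x)) (f i (f j y)) ≤
        a i j * dist x y + b i j * dist (f i x) (f i y) + c i j * dist (f j x) (f j y)) :
    (∀ B : Set X, B.Nonempty → IsCompact B →
      (⋃ i, f i '' B).Nonempty ∧ IsCompact (⋃ i, f i '' B)) ∧
    ∃! A : Set X, A.Nonempty ∧ IsCompact A ∧ (⋃ i, f i '' A) = A := by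
  classical
  haveI := Fintype.ofFinite I
  -- Part 1
  have part1 : ∀ B : Set X, B.Nonempty → IsCompact B →
      (⋃ i, f i '' B).Nonempty ∧ IsCompact (⋃ i, f i '' B) := by
    intro B hBne hBc
    obtain ⟨i⟩ := ‹Nonempty I›
    obtain ⟨x, hx⟩ := hBne
    exact ⟨⟨f i x, Set.mem_iUnion.mpr ⟨i, Set.mem_image_of_mem _ hx⟩⟩,
      isCompact_iUnion fun i => hBc.image (hf i)⟩
  -- the contraction factor
  have hneP : (Finset.univ : Finset (I × I)).Nonempty := Finset.univ_nonempty
  have hne : (Finset.univ : Finset I).Nonempty := Finset.univ_nonempty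
  set α : ℝ := max (1/2)
    (Finset.univ.sup' hneP fun p : I × I => a p.1 p.2 + b p.1 p.2 + c p.1 p.2) with hαdef
  have hα0 : (0:ℝ) ≤ α := le_trans (by norm_num) (le_max_left _ _)
  have hαhalf : (1/2:ℝ) ≤ α := le_max_left _ _
  have hα1 : α < 1 := by
    apply max_lt (by norm_num)
    rw [Finset.sup'_lt_iff]
    exact fun p _ => hd p.1 p.2
  have hsum : ∀ i j, a i j + b i j + c i j ≤ α := fun i j =>
    le_trans (Finset.le_sup' (f := fun p : I × I => a p.1 p.2 + b p.1 p.2 + c p.1 p.2)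
      (Finset.mem_univ (i, j))) (le_max_right _ _)
  set β : ℝ := Real.sqrt α with hβdef
  have hβ0 : 0 ≤ β := Real.sqrt_nonneg _
  have hβsq : β ^ 2 = α := Real.sq_sqrt hα0
  have hβ1 : β < 1 := by nlinarith
  have hβhalf : (1/2:ℝ) ≤ β := by nlinarith
  have hgeom : ∀ n : ℕ, α ^ (n / 2) ≤ 2 * β ^ n := by
    intro n
    have h1 : α ^ (n / 2) = β ^ (2 * (n / 2)) := by rw [pow_mul, hβsq]
    have h2 : β ^ (2 * (n / 2)) ≤ β ^ (n - 1) :=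
      pow_le_pow_of_le_one hβ0 hβ1.le (by omega)
    have h3 : β ^ (n - 1) ≤ 2 * β ^ n := by
      cases n with
      | zero => norm_num
      | succ k =>
        have hk : k + 1 - 1 = k := rfl
        rw [hk, pow_succ]
        calc β ^ k = 1 * β ^ k := (one_mul _).symm
          _ ≤ (2 * β) * β ^ k :=
              mul_le_mul_of_nonneg_right (by linarith) (pow_nonneg hβ0 k)
          _ = 2 * (β ^ k * β) := by ring
    rw [h1]; exact h2.trans h3
  -- the joint distance function
  set D : X → X → ℝ := fun x y =>
    max (dist x y) (Finset.univ.sup' hne fun i => dist (f i x) (f i y)) with hDdef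
  have hDd : ∀ x y : X, dist x y ≤ D x y := fun x y => le_max_left _ _
  have hDf : ∀ (i : I) (x y : X), dist (f i x) (f i y) ≤ D x y := fun i x y =>
    le_trans (Finset.le_sup' (f := fun i => dist (f i x) (f i y)) (Finset.mem_univ i))
      (le_max_right _ _)
  have hD0 : ∀ x y : X, 0 ≤ D x y := fun x y => le_trans dist_nonneg (hDd x y)
  have key := IFSAux.key f a b c ha hb hc hcc α hα0 hα1.le hsum D hDd hDf
  -- the address map
  obtain ⟨x₀⟩ := ‹Nonempty X›
  set u : (ℕ → I) → ℕ → X := fun ω n => IFSAux.comp f (List.ofFn fun k : Fin n => ω k) x₀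
    with hu
  set M : ℝ := 2 * Finset.univ.sup' hne (fun j => D x₀ (f j x₀)) with hM
  have hstep : ∀ (ω : ℕ → I) (n : ℕ), dist (u ω n) (u ω (n + 1)) ≤ M * β ^ n := by
    intro ω n
    have hword : u ω (n + 1)
        = IFSAux.comp f (List.ofFn fun k : Fin n => ω k) (f (ω n) x₀) := by
      show IFSAux.comp f (List.ofFn fun k : Fin (n+1) => ω k) x₀ = _
      rw [List.ofFn_succ', List.concat_eq_append, IFSAux.comp_concat]
      simp
    have hb1 : dist (u ω n) (u ω (n + 1)) ≤ α ^ (n / 2) * D x₀ (f (ω n) x₀) := by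
      rw [hword]
      exact key n _ (by simp) x₀ (f (ω n) x₀)
    have hb2 : D x₀ (f (ω n) x₀) ≤ Finset.univ.sup' hne (fun j => D x₀ (f j x₀)) :=
      Finset.le_sup' (f := fun j => D x₀ (f j x₀)) (Finset.mem_univ (ω n))
    calc dist (u ω n) (u ω (n + 1)) ≤ α ^ (n / 2) * D x₀ (f (ω n) x₀) := hb1
      _ ≤ (2 * β ^ n) * (Finset.univ.sup' hne (fun j => D x₀ (f j x₀))) := by
          apply mul_le_mul (hgeom n) hb2 (hD0 _ _)
          positivity
      _ = M * β ^ n := by rw [hM]; ring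
  have hcauchy : ∀ ω : ℕ → I, CauchySeq (u ω) :=
    fun ω => cauchySeq_of_le_geometric β M hβ1 (hstep ω)
  choose π hπ using fun ω => cauchySeq_tendsto_of_complete (hcauchy ω)
  have htail : ∀ (ω : ℕ → I) (n : ℕ), dist (u ω n) (π ω) ≤ M * β ^ n / (1 - β) :=
    fun ω n => dist_le_of_le_geometric_of_tendsto β M hβ1 (hstep ω) (hπ ω) n
  -- topology on the code space
  letI : TopologicalSpace I := ⊥
  haveI : DiscreteTopology I := ⟨rfl⟩
  have hπcont : Continuous π := by
    rw [continuous_iff_continuousAt]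
    intro ω
    rw [ContinuousAt, Metric.tendsto_nhds]
    intro ε hε
    obtain ⟨n, hn⟩ : ∃ n : ℕ, M * β ^ n / (1 - β) < ε / 3 := by
      have hβten : Tendsto (fun n : ℕ => M * β ^ n / (1 - β)) atTop (𝓝 0) := by
        have h := tendsto_pow_atTop_nhds_zero_of_lt_one hβ0 hβ1
        simpa using (h.const_mul M).div_const (1 - β)
      exact (hβten.eventually (gt_mem_nhds (by positivity : (0:ℝ) < ε / 3))).exists
    have hev : ∀ k : ℕ, ∀ᶠ ω' in 𝓝 ω, ω' k = ω k := by
      intro k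
      have h1 : Tendsto (fun ω' : ℕ → I => ω' k) (𝓝 ω) (𝓝 (ω k)) :=
        (continuous_apply k).continuousAt
      have h2 : {j : I | j = ω k} ∈ 𝓝 (ω k) := by
        rw [nhds_discrete]; exact Filter.mem_pure.mpr rfl
      exact h1 h2
    have hev' : ∀ᶠ ω' in 𝓝 ω, ∀ k ∈ Finset.range n, ω' k = ω k :=
      (Filter.eventually_all_finset _).mpr fun k _ => hev k
    filter_upwards [hev'] with ω' hagree
    have hun : u ω' n = u ω n := by
      show IFSAux.comp f (List.ofFn fun k : Fin n => ω' k) x₀ = _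
      have hfn : (fun k : Fin n => ω' k) = fun k : Fin n => ω k :=
        funext fun k => hagree k (Finset.mem_range.mpr k.isLt)
      rw [hfn]
    calc dist (π ω') (π ω)
        ≤ dist (π ω') (u ω' n) + dist (u ω' n) (π ω) := dist_triangle _ _ _
      _ = dist (u ω' n) (π ω') + dist (u ω n) (π ω) := by rw [dist_comm, hun]
      _ ≤ M * β ^ n / (1 - β) + M * β ^ n / (1 - β) := add_le_add (htail ω' n) (htail ω n)
      _ < ε / 3 + ε / 3 := by linarith
      _ < ε := by linarith
  -- the attractor
  have hAne : (Set.range π).Nonempty := Set.range_nonempty π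
  have hAc : IsCompact (Set.range π) := isCompact_range hπcont
  have hcons : ∀ (i : I) (ω : ℕ → I),
      π (fun n => Nat.casesOn n i ω) = f i (π ω) := by
    intro i ω
    set σ : ℕ → I := fun n => Nat.casesOn n i ω with hσ
    have hshift : ∀ n : ℕ, u σ (n + 1) = f i (u ω n) := by
      intro n
      show IFSAux.comp f (List.ofFn fun k : Fin (n+1) => σ k) x₀ = _
      rw [List.ofFn_succ]
      show f (σ 0) (IFSAux.comp f (List.ofFn fun k : Fin n => σ (Fin.succ k)) x₀) = _
      congr 1
    have h1 : Tendsto (fun n => u σ (n + 1)) atTop (𝓝 (π σ)) :=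
      (hπ σ).comp (tendsto_add_atTop_nat 1)
    have h2 : Tendsto (fun n => f i (u ω n)) atTop (𝓝 (f i (π ω))) :=
      ((hf i).continuousAt.tendsto).comp (hπ ω)
    have h1' : Tendsto (fun n => f i (u ω n)) atTop (𝓝 (π σ)) := by
      have : (fun n => u σ (n + 1)) = fun n => f i (u ω n) := funext hshift
      rwa [this] at h1
    exact tendsto_nhds_unique h1' h2
  have hfix : (⋃ i, f i '' Set.range π) = Set.range π := by
    ext x
    simp only [Set.mem_iUnion, Set.mem_image, Set.mem_range]
    constructor
    · rintro ⟨i, _, ⟨ω, rfl⟩, rfl⟩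
      exact ⟨fun n => Nat.casesOn n i ω, hcons i ω⟩
    · rintro ⟨ω, rfl⟩
      refine ⟨ω 0, π (fun n => ω (n + 1)), ⟨_, rfl⟩, ?_⟩
      rw [← hcons (ω 0) (fun n => ω (n + 1))]
      congr 1
      funext n
      cases n <;> rfl
  -- uniqueness
  have hsub : ∀ S T : Set X, S.Nonempty → IsCompact S → (⋃ i, f i '' S) = S →
      T.Nonempty → IsCompact T → (⋃ i, f i '' T) = T → S ⊆ T := by
    intro S T hSne hSc hSfix hTne hTc hTfix x hx
    obtain ⟨y₀, hy₀⟩ := hTne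
    have hKc : IsCompact ((S ∪ T) ∪ ⋃ i, f i '' (S ∪ T)) :=
      (hSc.union hTc).union (isCompact_iUnion fun i => (hSc.union hTc).image (hf i))
    obtain ⟨R, hR⟩ := Metric.isBounded_iff.mp hKc.isBounded
    have hDR : ∀ y ∈ S, ∀ z ∈ T, D y z ≤ R := by
      intro y hy z hz
      apply max_le
      · exact hR (Or.inl (Or.inl hy)) (Or.inl (Or.inr hz))
      · apply Finset.sup'_le
        intro i _
        exact hR (Or.inr (Set.mem_iUnion.mpr ⟨i, Set.mem_image_of_mem _ (Or.inl hy)⟩))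
          (Or.inr (Set.mem_iUnion.mpr ⟨i, Set.mem_image_of_mem _ (Or.inr hz)⟩))
    have hiterS : ∀ n : ℕ, (fun S => ⋃ i, f i '' S)^[n] S = S :=
      fun n => Function.iterate_fixed hSfix n
    have hiterT : ∀ n : ℕ, (fun S => ⋃ i, f i '' S)^[n] T = T :=
      fun n => Function.iterate_fixed hTfix n
    have hxd : ∀ m : ℕ, Metric.infDist x T ≤ α ^ m * R := by
      intro m
      have hxm : x ∈ (fun S => ⋃ i, f i '' S)^[2 * m] S := by rw [hiterS]; exact hx
      obtain ⟨w, hwl, y, hy, hcw⟩ := (IFSAux.mem_iterate_iff f S (2 * m) x).mp hxm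
      have hmem : IFSAux.comp f w y₀ ∈ T := by
        rw [← hiterT (2 * m)]
        exact (IFSAux.mem_iterate_iff f T (2 * m) _).mpr ⟨w, hwl, y₀, hy₀, rfl⟩
      have hexp : 2 * m / 2 = m := by omega
      calc Metric.infDist x T ≤ dist x (IFSAux.comp f w y₀) :=
            Metric.infDist_le_dist_of_mem hmem
        _ = dist (IFSAux.comp f w y) (IFSAux.comp f w y₀) := by rw [hcw]
        _ ≤ α ^ (2 * m / 2) * D y y₀ := key (2 * m) w hwl y y₀
        _ ≤ α ^ m * R := by
            rw [hexp]
            exact mul_le_mul_of_nonneg_left (hDR y hy y₀ hy₀) (pow_nonneg hα0 m)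
    have h0 : Metric.infDist x T ≤ 0 := by
      have ht : Tendsto (fun m : ℕ => α ^ m * R) atTop (𝓝 0) := by
        simpa using (tendsto_pow_atTop_nhds_zero_of_lt_one hα0 hα1).mul_const R
      exact ge_of_tendsto' ht hxd
    have hz : Metric.infDist x T = 0 := le_antisymm h0 Metric.infDist_nonneg
    exact (hTc.isClosed.mem_iff_infDist_zero ⟨y₀, hy₀⟩).mpr hz
  refine ⟨part1, Set.range π, ⟨hAne, hAc, hfix⟩, ?_⟩
  rintro A₁ ⟨h1ne, h1c, h1fix⟩
  exact Set.Subset.antisymm (hsub A₁ _ h1ne h1c h1fix hAne hAc hfix)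
    (hsub _ A₁ hAne hAc hfix h1ne h1c h1fix)
end

section
/- Let S = ((X,d), (f_i)_{i∈I}) be an iterated function system consisting of convex contractions. For each infinite word ω = ω₁ω₂ω₃… ∈ I^ℕ there exists a point a_ω ∈ X such that for every nonempty compact B ⊆ X, h(f_{ω₁} ∘ f_{ω₂} ∘ … ∘ f_{ω_n}(B), {a_ω}) → 0 as n → ∞. -/
/-- `compWord f ω n = f (ω 0) ∘ f (ω 1) ∘ ... ∘ f (ω (n-1))`, i.e. the composition
`f_{ω₁} ∘ ... ∘ f_{ω_n}` determined by the first `n` letters of the word `ω`. -/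
def compWord {I X : Type*} (f : I → X → X) : (ℕ → I) → ℕ → X → X
  | _, 0 => id
  | ω, n + 1 => f (ω 0) ∘ compWord f (fun k => ω (k + 1)) n

/-- Composition of the maps indexed by a list. -/
def compList {I X : Type*} (f : I → X → X) : List I → X → X
  | [], x => x
  | i :: l, x => f i (compList f l x)

lemma compWord_eq_compList {I X : Type*} (f : I → X → X) (ω : ℕ → I) (n : ℕ) :
    compWord f ω n = compList f (List.ofFn fun k : Fin n => ω k) := by
  induction n generalizing ω with
  | zero => rfl
  | succ n ih =>
    rw [List.ofFn_succ]
    funext x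
    show f (ω 0) (compWord f (fun k => ω (k + 1)) n x) = _
    rw [ih]
    simp [compList, Fin.val_succ]

lemma compWord_succ_right {I X : Type*} (f : I → X → X) (ω : ℕ → I) (n : ℕ) (x : X) :
    compWord f ω (n + 1) x = compWord f ω n (f (ω n) x) := by
  induction n generalizing ω with
  | zero => rfl
  | succ n ih =>
    show f (ω 0) (compWord f (fun k => ω (k + 1)) (n + 1) x) = _
    rw [ih]
    rfl

lemma compList_dist_le {X : Type*} [MetricSpace X] {I : Type*} [Fintype I]
    (f : I → X → X) (a b c : I → I → ℝ) (Q : ℝ)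
    (ha : ∀ i j, 0 ≤ a i j) (hb : ∀ i j, 0 ≤ b i j) (hc : ∀ i j, 0 ≤ c i j)
    (hQ0 : 0 ≤ Q) (hQ1 : Q ≤ 1) (hQ : ∀ i j, a i j + b i j + c i j ≤ Q)
    (hcc : ∀ i j (x y : X),
      dist (f i (f j x)) (f i (f j y)) ≤
        a i j * dist x y + b i j * dist (f i x) (f i y) + c i j * dist (f j x) (f j y))
    (l : List I) (x y : X) :
    dist (compList f l x) (compList f l y) ≤
      Q ^ (l.length / 2) * (dist x y + ∑ i, dist (f i x) (f i y)) := by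
  suffices H : ∀ n (l : List I), l.length ≤ n → ∀ x y : X,
      dist (compList f l x) (compList f l y) ≤
        Q ^ (l.length / 2) * (dist x y + ∑ i, dist (f i x) (f i y)) from
    H l.length l le_rfl x y
  intro n
  induction n with
  | zero =>
    intro l hl x y
    rw [List.length_eq_zero_iff.1 (Nat.le_zero.1 hl)]
    have hs : (0:ℝ) ≤ ∑ i, dist (f i x) (f i y) :=
      Finset.sum_nonneg fun i _ => dist_nonneg
    have h' : dist x y ≤ dist x y + ∑ i, dist (f i x) (f i y) := le_add_of_nonneg_right hs
    simpa [compList] using h'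
  | succ n ih =>
    intro l hl x y
    have hV0 : (0:ℝ) ≤ dist x y + ∑ i, dist (f i x) (f i y) :=
      add_nonneg dist_nonneg (Finset.sum_nonneg fun i _ => dist_nonneg)
    match l with
    | [] =>
      have hs : (0:ℝ) ≤ ∑ i, dist (f i x) (f i y) :=
        Finset.sum_nonneg fun i _ => dist_nonneg
      have h' : dist x y ≤ dist x y + ∑ i, dist (f i x) (f i y) := le_add_of_nonneg_right hs
      simpa [compList] using h'
    | [i] =>
      have hsingle : dist (f i x) (f i y) ≤ ∑ j, dist (f j x) (f j y) :=
        Finset.single_le_sum (f := fun j => dist (f j x) (f j y))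
          (fun j _ => dist_nonneg) (Finset.mem_univ i)
      have hd0 : (0:ℝ) ≤ dist x y := dist_nonneg
      show dist (f i (compList f [] x)) (f i (compList f [] y)) ≤ _
      simp only [compList]
      norm_num
      linarith
    | i :: j :: l' =>
      have hlen : l'.length ≤ n := by simp at hl; omega
      have hlen1 : (i :: l').length ≤ n := by simp at hl ⊢; omega
      have hlen2 : (j :: l').length ≤ n := by simp at hl ⊢; omega
      set m := l'.length with hm
      set V := dist x y + ∑ k, dist (f k x) (f k y) with hV
      have h0 := ih l' hlen x y
      have h1 := ih (i :: l') hlen1 x y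
      have h2 := ih (j :: l') hlen2 x y
      have hpow : Q ^ ((m + 1) / 2) ≤ Q ^ (m / 2) :=
        pow_le_pow_of_le_one hQ0 hQ1 (Nat.div_le_div_right (Nat.le_succ m))
      have hP0 : (0:ℝ) ≤ Q ^ (m / 2) := pow_nonneg hQ0 _
      have hPV : (0:ℝ) ≤ Q ^ (m / 2) * V := mul_nonneg hP0 hV0
      have key := hcc i j (compList f l' x) (compList f l' y)
      have g1 : dist (f i (compList f l' x)) (f i (compList f l' y)) ≤ Q ^ (m / 2) * V := by
        have : dist (compList f (i :: l') x) (compList f (i :: l') y) ≤ Q ^ ((m+1) / 2) * V := by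
          simpa [compList, hm] using h1
        calc dist (f i (compList f l' x)) (f i (compList f l' y))
            ≤ Q ^ ((m+1) / 2) * V := this
          _ ≤ Q ^ (m / 2) * V := mul_le_mul_of_nonneg_right hpow hV0
      have g2 : dist (f j (compList f l' x)) (f j (compList f l' y)) ≤ Q ^ (m / 2) * V := by
        have : dist (compList f (j :: l') x) (compList f (j :: l') y) ≤ Q ^ ((m+1) / 2) * V := by
          simpa [compList, hm] using h2
        calc dist (f j (compList f l' x)) (f j (compList f l' y))
            ≤ Q ^ ((m+1) / 2) * V := this
          _ ≤ Q ^ (m / 2) * V := mul_le_mul_of_nonneg_right hpow hV0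
      have hlen' : (i :: j :: l').length / 2 = m / 2 + 1 := by simp [hm]; omega
      show dist (f i (f j (compList f l' x))) (f i (f j (compList f l' y))) ≤ _
      rw [hlen', pow_succ]
      have e0 : a i j * dist (compList f l' x) (compList f l' y) ≤ a i j * (Q ^ (m / 2) * V) :=
        mul_le_mul_of_nonneg_left h0 (ha i j)
      have e1 : b i j * dist (f i (compList f l' x)) (f i (compList f l' y)) ≤
          b i j * (Q ^ (m / 2) * V) := mul_le_mul_of_nonneg_left g1 (hb i j)
      have e2 : c i j * dist (f j (compList f l' x)) (f j (compList f l' y)) ≤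
          c i j * (Q ^ (m / 2) * V) := mul_le_mul_of_nonneg_left g2 (hc i j)
      have efin : (a i j + b i j + c i j) * (Q ^ (m / 2) * V) ≤ Q * (Q ^ (m / 2) * V) :=
        mul_le_mul_of_nonneg_right (hQ i j) hPV
      calc dist (f i (f j (compList f l' x))) (f i (f j (compList f l' y)))
          ≤ a i j * dist (compList f l' x) (compList f l' y)
            + b i j * dist (f i (compList f l' x)) (f i (compList f l' y))
            + c i j * dist (f j (compList f l' x)) (f j (compList f l' y)) := key
        _ ≤ (a i j + b i j + c i j) * (Q ^ (m / 2) * V) := by linarith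
        _ ≤ Q * (Q ^ (m / 2) * V) := efin
        _ = Q ^ (m / 2) * Q * V := by ring

/-- For each infinite word ω there is a point a_ω such that the images of any
nonempty compact set under the first n maps of ω converge to {a_ω}. -/
theorem IFS_convex_contractions_pointwise_limit
    {X : Type*} [MetricSpace X] [CompleteSpace X] [Nonempty X]
    {I : Type*} [Finite I] [Nonempty I]
    (f : I → X → X) (hf : ∀ i, Continuous (f i))
    (a b c : I → I → ℝ)
    (ha : ∀ i j, 0 ≤ a i j) (hb : ∀ i j, 0 ≤ b i j) (hc : ∀ i j, 0 ≤ c i j)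
    (hd : ∀ i j, a i j + b i j + c i j < 1)
    (hcc : ∀ i j (x y : X),
      dist (f i (f j x)) (f i (f j y)) ≤
        a i j * dist x y + b i j * dist (f i x) (f i y) + c i j * dist (f j x) (f j y))
    (ω : ℕ → I) :
    ∃ aω : X, ∀ B : Set X, B.Nonempty → IsCompact B →
      Filter.Tendsto
        (fun n : ℕ => EMetric.hausdorffEdist (compWord f ω n '' B) {aω})
        Filter.atTop (nhds 0) := by
  cases nonempty_fintype I
  -- the uniform contraction constant
  set Q : ℝ := max ((Finset.univ : Finset (I × I)).sup'
      Finset.univ_nonempty (fun p : I × I => a p.1 p.2 + b p.1 p.2 + c p.1 p.2)) (1/2) with hQdef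
  have hQ0 : (0:ℝ) < Q := lt_of_lt_of_le (by norm_num) (le_max_right _ _)
  have hQ1 : Q < 1 := by
    refine max_lt ?_ (by norm_num)
    rw [Finset.sup'_lt_iff]
    exact fun p _ => hd p.1 p.2
  have hQle : ∀ i j, a i j + b i j + c i j ≤ Q := fun i j =>
    le_trans (Finset.le_sup' (f := fun p : I × I => a p.1 p.2 + b p.1 p.2 + c p.1 p.2)
      (Finset.mem_univ (i, j))) (le_max_left _ _)
  set V : X → X → ℝ := fun x y => dist x y + ∑ i, dist (f i x) (f i y) with hVdef
  have hV0 : ∀ x y, 0 ≤ V x y := fun x y =>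
    add_nonneg dist_nonneg (Finset.sum_nonneg fun i _ => dist_nonneg)
  have key : ∀ (l : List I) (x y : X),
      dist (compList f l x) (compList f l y) ≤ Q ^ (l.length / 2) * V x y :=
    fun l x y => compList_dist_le f a b c Q ha hb hc hQ0.le hQ1.le hQle hcc l x y
  have keyW : ∀ (n : ℕ) (x y : X),
      dist (compWord f ω n x) (compWord f ω n y) ≤ Q ^ (n / 2) * V x y := by
    intro n x y
    have := key (List.ofFn fun k : Fin n => ω k) x y
    rwa [compWord_eq_compList f ω n, List.length_ofFn] at *
  obtain ⟨x₀⟩ := ‹Nonempty X›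
  set u : ℕ → X := fun n => compWord f ω n x₀ with hu
  set C0 : ℝ := ∑ i, V x₀ (f i x₀) with hC0
  have hC00 : 0 ≤ C0 := Finset.sum_nonneg fun i _ => hV0 _ _
  have hstep : ∀ n, dist (u n) (u (n + 1)) ≤ Q ^ (n / 2) * C0 := by
    intro n
    show dist (compWord f ω n x₀) (compWord f ω (n + 1) x₀) ≤ _
    rw [compWord_succ_right f ω n x₀]
    calc dist (compWord f ω n x₀) (compWord f ω n (f (ω n) x₀))
        ≤ Q ^ (n / 2) * V x₀ (f (ω n) x₀) := keyW n _ _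
      _ ≤ Q ^ (n / 2) * C0 := by
          refine mul_le_mul_of_nonneg_left ?_ (pow_nonneg hQ0.le _)
          rw [hC0]
          exact Finset.single_le_sum (f := fun i => V x₀ (f i x₀))
            (fun i _ => hV0 _ _) (Finset.mem_univ (ω n))
  -- geometric bound via the square root of Q
  set r : ℝ := Real.sqrt Q with hr
  have hr0 : 0 < r := Real.sqrt_pos.2 hQ0
  have hr1 : r < 1 := by
    rw [hr, show (1:ℝ) = Real.sqrt 1 by simp]
    exact Real.sqrt_lt_sqrt hQ0.le hQ1
  have hrsq : r ^ 2 = Q := Real.sq_sqrt hQ0.le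
  have hpow_r : ∀ n : ℕ, Q ^ (n / 2) * r ≤ r ^ n := by
    intro n
    have : Q ^ (n / 2) * r = r ^ (2 * (n / 2) + 1) := by
      rw [pow_succ, pow_mul, hrsq]
    rw [this]
    exact pow_le_pow_of_le_one hr0.le hr1.le (by omega)
  have hcauchy : CauchySeq u := by
    refine cauchySeq_of_le_geometric r (C0 / r) hr1 fun n => ?_
    calc dist (u n) (u (n + 1)) ≤ Q ^ (n / 2) * C0 := hstep n
      _ ≤ C0 / r * r ^ n := by
          rw [div_mul_eq_mul_div, le_div_iff₀ hr0]
          calc Q ^ (n / 2) * C0 * r = C0 * (Q ^ (n / 2) * r) := by ring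
            _ ≤ C0 * r ^ n := mul_le_mul_of_nonneg_left (hpow_r n) hC00
            _ = C0 * r ^ n * 1 := by ring
            _ = C0 * r ^ n := by ring
  obtain ⟨aω, haω⟩ := cauchySeq_tendsto_of_complete hcauchy
  refine ⟨aω, ?_⟩
  intro B hBne hBc
  -- bound V on the compact set B
  have hVcont : Continuous fun z => V z x₀ := by
    apply Continuous.add
    · exact continuous_id.dist continuous_const
    · exact continuous_finset_sum _ fun i _ => (hf i).dist continuous_const
  obtain ⟨z₀, hz₀B, hz₀⟩ := hBc.exists_isMaxOn hBne hVcont.continuousOn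
  set M : ℝ := V z₀ x₀ with hM
  set ε : ℕ → ℝ := fun n => Q ^ (n / 2) * M + dist (u n) aω with hε
  have hdiv : Filter.Tendsto (fun n : ℕ => n / 2) Filter.atTop Filter.atTop :=
    Filter.tendsto_atTop_atTop.2 fun bb => ⟨2 * bb, fun n hn => by omega⟩
  have hQn : Filter.Tendsto (fun n : ℕ => Q ^ (n / 2)) Filter.atTop (nhds 0) :=
    (tendsto_pow_atTop_nhds_zero_of_lt_one hQ0.le hQ1).comp hdiv
  have hdist : Filter.Tendsto (fun n => dist (u n) aω) Filter.atTop (nhds 0) :=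
    tendsto_iff_dist_tendsto_zero.1 haω
  have hε0 : Filter.Tendsto ε Filter.atTop (nhds 0) := by
    have := (hQn.mul_const M).add hdist
    simpa using this
  have hpt : ∀ n, ∀ z ∈ B, dist (compWord f ω n z) aω ≤ ε n := by
    intro n z hz
    calc dist (compWord f ω n z) aω
        ≤ dist (compWord f ω n z) (compWord f ω n x₀) + dist (u n) aω :=
          dist_triangle _ _ _
      _ ≤ Q ^ (n / 2) * M + dist (u n) aω := by
          gcongr ?_ + _
          calc dist (compWord f ω n z) (compWord f ω n x₀) ≤ Q ^ (n / 2) * V z x₀ := keyW n z x₀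
            _ ≤ Q ^ (n / 2) * M :=
              mul_le_mul_of_nonneg_left (hz₀ hz) (pow_nonneg hQ0.le _)
  have hH : ∀ n, EMetric.hausdorffEdist (compWord f ω n '' B) {aω} ≤ ENNReal.ofReal (ε n) := by
    intro n
    apply EMetric.hausdorffEdist_le_of_mem_edist
    · rintro _ ⟨z, hz, rfl⟩
      exact ⟨aω, Set.mem_singleton _, by
        rw [edist_dist]; exact ENNReal.ofReal_le_ofReal (hpt n z hz)⟩
    · rintro y (rfl : y = aω)
      refine ⟨compWord f ω n z₀, ⟨z₀, hz₀B, rfl⟩, ?_⟩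
      rw [edist_dist, dist_comm]
      exact ENNReal.ofReal_le_ofReal (hpt n z₀ hz₀B)
  have hofReal : Filter.Tendsto (fun n => ENNReal.ofReal (ε n)) Filter.atTop (nhds 0) := by
    have := (ENNReal.continuous_ofReal.tendsto 0).comp hε0
    simpa [Function.comp_def] using this
  exact tendsto_of_tendsto_of_tendsto_of_le_of_le tendsto_const_nhds hofReal
    (fun n => zero_le) hH
end

section
/- Let S = ((X,d), (f_i)_{i∈I}) be an iterated function system consisting of convex contractions with attractor A. For every ω ∈ I^ℕ, the diameters of the sets A_{[ω]_n} = f_{ω₁}∘…∘f_{ω_n}(A) tend to 0 as n → ∞. -/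
/-- Along any infinite word ω, the diameters of the sets f_{[ω]_n}(A) tend to 0. -/
theorem IFS_convex_contractions_diam_tendsto_zero
    {X : Type*} [MetricSpace X] [CompleteSpace X] [Nonempty X]
    {I : Type*} [Finite I] [Nonempty I]
    (f : I → X → X) (hf : ∀ i, Continuous (f i))
    (a b c : I → I → ℝ)
    (ha : ∀ i j, 0 ≤ a i j) (hb : ∀ i j, 0 ≤ b i j) (hc : ∀ i j, 0 ≤ c i j)
    (hd : ∀ i j, a i j + b i j + c i j < 1)
    (hcc : ∀ i j (x y : X),
      dist (f i (f j x)) (f i (f j y)) ≤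
        a i j * dist x y + b i j * dist (f i x) (f i y) + c i j * dist (f j x) (f j y))
    (A : Set X) (hAne : A.Nonempty) (hAc : IsCompact A) (hAfix : (⋃ i, f i '' A) = A)
    (ω : ℕ → I) :
    Filter.Tendsto (fun n : ℕ => EMetric.diam (compWord f ω n '' A))
      Filter.atTop (nhds 0) := by
  classical
  haveI := Fintype.ofFinite I
  -- each f i maps A into A
  have hsub : ∀ i, f i '' A ⊆ A := by
    intro i
    conv_rhs => rw [← hAfix]
    exact Set.subset_iUnion (fun i => f i '' A) i
  -- each compWord image is inside A
  have hcw : ∀ (ω : ℕ → I) (n : ℕ), compWord f ω n '' A ⊆ A := by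
    intro ω n
    induction n generalizing ω with
    | zero => simp [compWord]
    | succ n ih =>
      have : compWord f ω (n+1) = f (ω 0) ∘ compWord f (fun k => ω (k+1)) n := rfl
      rw [this, Set.image_comp]
      exact (Set.image_mono (ih _)).trans (hsub _)
  have hbdd : ∀ (ω : ℕ → I) (n : ℕ), Bornology.IsBounded (compWord f ω n '' A) :=
    fun ω n => hAc.isBounded.subset (hcw ω n)
  have hbd : ∀ (ω : ℕ → I) (n : ℕ), Metric.diam (compWord f ω n '' A) ≤ Metric.diam A :=
    fun ω n => Metric.diam_mono (hcw ω n) hAc.isBounded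
  set M : ℕ → ℝ := fun n => ⨆ ω : ℕ → I, Metric.diam (compWord f ω n '' A) with hM
  have hMbdd : ∀ n, BddAbove (Set.range fun ω : ℕ → I => Metric.diam (compWord f ω n '' A)) :=
    fun n => ⟨Metric.diam A, by rintro x ⟨ω, rfl⟩; exact hbd ω n⟩
  have hDM : ∀ (ω : ℕ → I) (n : ℕ), Metric.diam (compWord f ω n '' A) ≤ M n :=
    fun ω n => le_ciSup (hMbdd n) ω
  have hM0 : ∀ n, 0 ≤ M n := fun n => Metric.diam_nonneg.trans (hDM ω n)
  -- uniform contraction constant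
  have hPne : (Finset.univ : Finset (I × I)).Nonempty := Finset.univ_nonempty
  set q : ℝ := Finset.univ.sup' hPne (fun p : I × I => a p.1 p.2 + b p.1 p.2 + c p.1 p.2)
    with hq
  have hqle : ∀ i j, a i j + b i j + c i j ≤ q := fun i j =>
    Finset.le_sup' (f := fun p : I × I => a p.1 p.2 + b p.1 p.2 + c p.1 p.2)
      (Finset.mem_univ (i, j))
  have hq1 : q < 1 := by
    rw [hq, Finset.sup'_lt_iff]
    exact fun p _ => hd p.1 p.2
  have hq0 : 0 ≤ q := by
    obtain ⟨i⟩ := (inferInstance : Nonempty I)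
    have := hqle i i
    have := ha i i; have := hb i i; have := hc i i
    linarith
  -- the key recursive estimate
  have key : ∀ (ω : ℕ → I) (n : ℕ),
      Metric.diam (compWord f ω (n+2) '' A) ≤ q * max (M n) (M (n+1)) := by
    intro ω n
    have hmax0 : 0 ≤ max (M n) (M (n+1)) := le_max_of_le_left (hM0 n)
    apply Metric.diam_le_of_forall_dist_le (mul_nonneg hq0 hmax0)
    rintro x ⟨u, hu, rfl⟩ y ⟨v, hv, rfl⟩
    set g := compWord f (fun k => ω (k+2)) n with hg
    have hx : ∀ w, compWord f ω (n+2) w = f (ω 0) (f (ω 1) (g w)) := fun w => rfl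
    -- identify f (ω 0) ∘ g as a compWord of length n+1
    have h0 : ∀ w, f (ω 0) (g w)
        = compWord f (fun k => if k = 0 then ω 0 else ω (k+1)) (n+1) w := by
      intro w
      have hfun : (fun k => (fun m => if m = 0 then ω 0 else ω (m+1)) (k+1))
          = fun k => ω (k+2) := by funext k; simp
      show f (ω 0) (g w)
        = (f (if (0:ℕ) = 0 then ω 0 else ω 1) ∘
            compWord f (fun k => if k + 1 = 0 then ω 0 else ω (k+1+1)) n) w
      simp only [Function.comp, if_true]
      have hfun2 : (fun k : ℕ => if k + 1 = 0 then ω 0 else ω (k+1+1)) = fun k => ω (k+2) := by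
        funext k; simp
      rw [hfun2]
    have h1 : ∀ w, f (ω 1) (g w) = compWord f (fun k => ω (k+1)) (n+1) w := fun w => rfl
    have hguA : g u ∈ compWord f (fun k => ω (k+2)) n '' A := ⟨u, hu, rfl⟩
    have hgvA : g v ∈ compWord f (fun k => ω (k+2)) n '' A := ⟨v, hv, rfl⟩
    have e1 : dist (g u) (g v) ≤ M n :=
      (Metric.dist_le_diam_of_mem (hbdd _ n) hguA hgvA).trans (hDM _ n)
    have e2 : dist (f (ω 0) (g u)) (f (ω 0) (g v)) ≤ M (n+1) := by
      rw [h0 u, h0 v]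
      exact (Metric.dist_le_diam_of_mem (hbdd _ (n+1)) ⟨u, hu, rfl⟩ ⟨v, hv, rfl⟩).trans
        (hDM _ (n+1))
    have e3 : dist (f (ω 1) (g u)) (f (ω 1) (g v)) ≤ M (n+1) := by
      rw [h1 u, h1 v]
      exact (Metric.dist_le_diam_of_mem (hbdd _ (n+1)) ⟨u, hu, rfl⟩ ⟨v, hv, rfl⟩).trans
        (hDM _ (n+1))
    have hMn : M n ≤ max (M n) (M (n+1)) := le_max_left _ _
    have hMn1 : M (n+1) ≤ max (M n) (M (n+1)) := le_max_right _ _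
    calc dist (compWord f ω (n+2) u) (compWord f ω (n+2) v)
        = dist (f (ω 0) (f (ω 1) (g u))) (f (ω 0) (f (ω 1) (g v))) := by rw [hx u, hx v]
      _ ≤ a (ω 0) (ω 1) * dist (g u) (g v)
          + b (ω 0) (ω 1) * dist (f (ω 0) (g u)) (f (ω 0) (g v))
          + c (ω 0) (ω 1) * dist (f (ω 1) (g u)) (f (ω 1) (g v)) := hcc _ _ _ _
      _ ≤ a (ω 0) (ω 1) * max (M n) (M (n+1))
          + b (ω 0) (ω 1) * max (M n) (M (n+1))
          + c (ω 0) (ω 1) * max (M n) (M (n+1)) := by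
            gcongr
            · exact ha _ _
            · exact e1.trans hMn
            · exact hb _ _
            · exact e2.trans hMn1
            · exact hc _ _
            · exact e3.trans hMn1
      _ = (a (ω 0) (ω 1) + b (ω 0) (ω 1) + c (ω 0) (ω 1)) * max (M n) (M (n+1)) := by ring
      _ ≤ q * max (M n) (M (n+1)) := mul_le_mul_of_nonneg_right (hqle _ _) hmax0
  have Mkey : ∀ n, M (n+2) ≤ q * max (M n) (M (n+1)) := fun n =>
    ciSup_le (fun ω' => key ω' n)
  set N : ℕ → ℝ := fun n => max (M n) (M (n+1)) with hN
  have hN0 : ∀ n, 0 ≤ N n := fun n => le_max_of_le_left (hM0 n)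
  have hNstep : ∀ n, M (n+2) ≤ q * N n := Mkey
  have hNmono : ∀ n, N (n+1) ≤ N n := by
    intro n
    have h1 : M (n+1) ≤ N n := le_max_right _ _
    have h2 : M (n+2) ≤ N n := (hNstep n).trans (by nlinarith [hN0 n])
    exact max_le h1 h2
  have hNanti : Antitone N := antitone_nat_of_succ_le hNmono
  have hNgeom : ∀ k, N (2*k) ≤ q^k * N 0 := by
    intro k
    induction k with
    | zero => simp
    | succ k ih =>
      have heq : 2*(k+1) = 2*k+2 := by ring
      rw [heq]
      have h1 : M (2*k+2) ≤ q * N (2*k) := hNstep (2*k)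
      have h2 : M (2*k+3) ≤ q * N (2*k+1) := hNstep (2*k+1)
      have h3 : N (2*k+1) ≤ N (2*k) := hNmono _
      have : N (2*k+2) ≤ q * N (2*k) := by
        apply max_le h1
        calc M (2*k+3) ≤ q * N (2*k+1) := h2
          _ ≤ q * N (2*k) := mul_le_mul_of_nonneg_left h3 hq0
      calc N (2*k+2) ≤ q * N (2*k) := this
        _ ≤ q * (q^k * N 0) := mul_le_mul_of_nonneg_left ih hq0
        _ = q^(k+1) * N 0 := by ring
  have hMbound : ∀ n, M n ≤ q^(n/2) * N 0 := by
    intro n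
    have h1 : M n ≤ N n := le_max_left _ _
    have h2 : N n ≤ N (2*(n/2)) := hNanti (Nat.mul_div_le n 2)
    exact h1.trans (h2.trans (hNgeom (n/2)))
  -- real-valued convergence
  have hreal : Filter.Tendsto (fun n : ℕ => q^(n/2) * N 0) Filter.atTop (nhds 0) := by
    have hpow : Filter.Tendsto (fun k : ℕ => q^k) Filter.atTop (nhds 0) :=
      tendsto_pow_atTop_nhds_zero_of_lt_one hq0 hq1
    have hdiv : Filter.Tendsto (fun n : ℕ => n / 2) Filter.atTop Filter.atTop := by
      apply Filter.tendsto_atTop_atTop.mpr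
      intro b
      exact ⟨2*b, fun n hn => Nat.le_div_iff_mul_le (by norm_num) |>.mpr (by omega)⟩
    have := (hpow.comp hdiv).mul_const (N 0)
    simpa using this
  -- pass to ENNReal
  have hE : ∀ n, EMetric.diam (compWord f ω n '' A) ≤ ENNReal.ofReal (q^(n/2) * N 0) := by
    intro n
    apply EMetric.diam_le
    intro x hx y hy
    rw [edist_dist]
    exact ENNReal.ofReal_le_ofReal
      ((Metric.dist_le_diam_of_mem (hbdd ω n) hx hy).trans ((hDM ω n).trans (hMbound n)))
  have hU : Filter.Tendsto (fun n : ℕ => ENNReal.ofReal (q^(n/2) * N 0))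
      Filter.atTop (nhds 0) := by
    rw [← ENNReal.ofReal_zero]
    exact ENNReal.tendsto_ofReal hreal
  exact tendsto_of_tendsto_of_tendsto_of_le_of_le tendsto_const_nhds hU
    (fun n => zero_le) hE
end

section
/- Let S = ((X,d), (f_i)_{i∈I}) be an iterated function system consisting of convex contractions with attractor A, and for ω ∈ I^ℕ let a_ω be the point with h(f_{[ω]_n}(B), {a_ω}) → 0 for all B ∈ 𝒦(X). Then for every ω ∈ I^ℕ, the intersection ⋂_{n∈ℕ} f_{ω₁}∘…∘f_{ω_n}(A) equals the singleton {a_ω}. -/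
lemma compWord_succ' {I X : Type*} (f : I → X → X) (ω : ℕ → I) (n : ℕ) :
    compWord f ω (n + 1) = compWord f ω n ∘ f (ω n) := by
  induction n generalizing ω with
  | zero => rfl
  | succ n ih =>
    show f (ω 0) ∘ compWord f (fun k => ω (k + 1)) (n + 1) = _
    rw [ih]
    rfl

lemma compWord_continuous {I X : Type*} [TopologicalSpace X] (f : I → X → X)
    (hf : ∀ i, Continuous (f i)) (ω : ℕ → I) (n : ℕ) :
    Continuous (compWord f ω n) := by
  induction n generalizing ω with
  | zero => exact continuous_id
  | succ n ih => exact (hf (ω 0)).comp (ih _)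

/-- The intersection of the sets A_{[ω]_n} is the singleton {a_ω}. -/
theorem IFS_convex_contractions_iInter_eq_singleton
    {X : Type*} [MetricSpace X] [CompleteSpace X] [Nonempty X]
    {I : Type*} [Finite I] [Nonempty I]
    (f : I → X → X) (hf : ∀ i, Continuous (f i))
    (a b c : I → I → ℝ)
    (ha : ∀ i j, 0 ≤ a i j) (hb : ∀ i j, 0 ≤ b i j) (hc : ∀ i j, 0 ≤ c i j)
    (hd : ∀ i j, a i j + b i j + c i j < 1)
    (hcc : ∀ i j (x y : X),
      dist (f i (f j x)) (f i (f j y)) ≤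
        a i j * dist x y + b i j * dist (f i x) (f i y) + c i j * dist (f j x) (f j y))
    (A : Set X) (hAne : A.Nonempty) (hAc : IsCompact A) (hAfix : (⋃ i, f i '' A) = A)
    (aω : (ℕ → I) → X)
    (haω : ∀ (ω : ℕ → I) (B : Set X), B.Nonempty → IsCompact B →
      Filter.Tendsto
        (fun n : ℕ => EMetric.hausdorffEdist (compWord f ω n '' B) {aω ω})
        Filter.atTop (nhds 0)) :
    ∀ ω : ℕ → I, (⋂ n : ℕ, compWord f ω n '' A) = {aω ω} := by
  intro ω
  have hsub : ∀ i, f i '' A ⊆ A := by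
    intro i
    conv_rhs => rw [← hAfix]
    exact Set.subset_iUnion (fun i => f i '' A) i
  have hanti : Antitone (fun n => compWord f ω n '' A) := by
    apply antitone_nat_of_succ_le
    intro n
    rw [compWord_succ', Set.image_comp]
    exact Set.image_mono (hsub _)
  have hcpt : ∀ n, IsCompact (compWord f ω n '' A) :=
    fun n => hAc.image (compWord_continuous f hf ω n)
  have htd := haω ω A hAne hAc
  apply Set.eq_singleton_iff_unique_mem.mpr
  constructor
  · refine Set.mem_iInter.mpr fun n => ?_
    have hinf : EMetric.infEdist (aω ω) (compWord f ω n '' A) = 0 := by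
      refine le_antisymm ?_ zero_le
      refine ge_of_tendsto htd ?_
      filter_upwards [Filter.eventually_ge_atTop n] with m hm
      calc EMetric.infEdist (aω ω) (compWord f ω n '' A)
          ≤ EMetric.infEdist (aω ω) (compWord f ω m '' A) :=
            EMetric.infEdist_anti (hanti hm)
        _ ≤ EMetric.hausdorffEdist ({aω ω} : Set X) (compWord f ω m '' A) :=
            EMetric.infEdist_le_hausdorffEdist_of_mem rfl
        _ = EMetric.hausdorffEdist (compWord f ω m '' A) ({aω ω} : Set X) :=
            EMetric.hausdorffEdist_comm
    rw [← (hcpt n).isClosed.closure_eq]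
    exact EMetric.mem_closure_iff_infEdist_zero.mpr hinf
  · intro x hx
    have h0 : edist x (aω ω) = 0 := by
      refine le_antisymm ?_ zero_le
      refine ge_of_tendsto htd (Filter.Eventually.of_forall fun n => ?_)
      calc edist x (aω ω) = EMetric.infEdist x ({aω ω} : Set X) :=
            (EMetric.infEdist_singleton).symm
        _ ≤ EMetric.hausdorffEdist (compWord f ω n '' A) ({aω ω} : Set X) :=
            EMetric.infEdist_le_hausdorffEdist_of_mem (Set.mem_iInter.mp hx n)
    exact edist_eq_zero.mp h0
end

section
/- Let S = ((X,d), (f_i)_{i∈I}) be an iterated function system consisting of convex contractions with attractor A, and define π : I^ℕ → A by π(ω) = a_ω, where {a_ω} is the common limit of f_{[ω]_n}(B) in the Hausdorff metric. Then π is continuous (where I^ℕ carries the metric d_Λ(α,β) = 2^{−n} with n the first index where α and β differ), π is surjective onto A, and π(iω) = f_i(π(ω)) for every i ∈ I and ω ∈ I^ℕ. -/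
lemma compWord_cons {I X : Type*} (f : I → X → X) (i : I) (ω : ℕ → I) (n : ℕ) (x : X) :
    compWord f (fun k => Nat.casesOn k i ω) (n + 1) x = f i (compWord f ω n x) := rfl

lemma compWord_mem {I X : Type*} (f : I → X → X) {A : Set X}
    (hfA : ∀ i x, x ∈ A → f i x ∈ A) (ω : ℕ → I) (n : ℕ) {x : X} (hx : x ∈ A) :
    compWord f ω n x ∈ A := by
  induction n generalizing ω with
  | zero => exact hx
  | succ n ih => exact hfA _ _ (ih _)

lemma compWord_congr {I X : Type*} (f : I → X → X) {α β : ℕ → I} (n : ℕ)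
    (h : ∀ k < n, α k = β k) (x : X) : compWord f α n x = compWord f β n x := by
  induction n generalizing α β x with
  | zero => rfl
  | succ n ih =>
    show f (α 0) (compWord f (fun k => α (k + 1)) n x)
        = f (β 0) (compWord f (fun k => β (k + 1)) n x)
    rw [h 0 (Nat.succ_pos n), ih (fun k hk => h (k + 1) (by omega)) x]

/-- The key contraction estimate: compositions of length `n` contract by `r ^ (n / 2)`. -/
lemma compWord_dist_le {I X : Type*} [MetricSpace X] (f : I → X → X)
    (a b c : I → I → ℝ) (ha : ∀ i j, 0 ≤ a i j) (hb : ∀ i j, 0 ≤ b i j)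
    (hc : ∀ i j, 0 ≤ c i j)
    (hcc : ∀ i j (x y : X),
      dist (f i (f j x)) (f i (f j y)) ≤
        a i j * dist x y + b i j * dist (f i x) (f i y) + c i j * dist (f j x) (f j y))
    {A : Set X} (hfA : ∀ i x, x ∈ A → f i x ∈ A)
    {r C : ℝ} (hr0 : 0 ≤ r) (hr1 : r ≤ 1) (hr : ∀ i j, a i j + b i j + c i j ≤ r)
    (hC0 : 0 ≤ C) (hC : ∀ x ∈ A, ∀ y ∈ A, dist x y ≤ C) :
    ∀ n (ω : ℕ → I) (x y : X), x ∈ A → y ∈ A →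
      dist (compWord f ω n x) (compWord f ω n y) ≤ r ^ (n / 2) * C := by
  intro n
  induction n using Nat.strong_induction_on with
  | _ n IH =>
    match n with
    | 0 =>
      intro ω x y hx hy
      simpa [compWord] using hC x hx y hy
    | 1 =>
      intro ω x y hx hy
      simpa [compWord] using hC _ (hfA _ _ hx) _ (hfA _ _ hy)
    | (n + 2) =>
      intro ω x y hx hy
      set ω2 : ℕ → I := fun k => ω (k + 1 + 1) with hω2
      set u := compWord f ω2 n x with hu
      set v := compWord f ω2 n y with hv
      set i := ω 0
      set j := ω 1
      have hmono : r ^ ((n + 1) / 2) * C ≤ r ^ (n / 2) * C :=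
        mul_le_mul_of_nonneg_right
          (pow_le_pow_of_le_one hr0 hr1 (Nat.div_le_div_right (Nat.le_succ n))) hC0
      have h0 : dist u v ≤ r ^ (n / 2) * C := IH n (by omega) ω2 x y hx hy
      have h1 : dist (f i u) (f i v) ≤ r ^ (n / 2) * C := by
        have := IH (n + 1) (by omega) (fun k => Nat.casesOn k i ω2) x y hx hy
        rw [compWord_cons, compWord_cons] at this
        exact this.trans hmono
      have h2 : dist (f j u) (f j v) ≤ r ^ (n / 2) * C := by
        have := IH (n + 1) (by omega) (fun k => Nat.casesOn k j ω2) x y hx hy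
        rw [compWord_cons, compWord_cons] at this
        exact this.trans hmono
      have hdist0 : 0 ≤ r ^ (n / 2) * C := mul_nonneg (pow_nonneg hr0 _) hC0
      have hdiv : (n + 2) / 2 = n / 2 + 1 := Nat.add_div_right n (by norm_num)
      calc dist (compWord f ω (n + 2) x) (compWord f ω (n + 2) y)
          = dist (f i (f j u)) (f i (f j v)) := rfl
        _ ≤ a i j * dist u v + b i j * dist (f i u) (f i v) + c i j * dist (f j u) (f j v) :=
            hcc i j u v
        _ ≤ a i j * (r ^ (n / 2) * C) + b i j * (r ^ (n / 2) * C) + c i j * (r ^ (n / 2) * C) :=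
            add_le_add (add_le_add (mul_le_mul_of_nonneg_left h0 (ha i j))
              (mul_le_mul_of_nonneg_left h1 (hb i j)))
              (mul_le_mul_of_nonneg_left h2 (hc i j))
        _ = (a i j + b i j + c i j) * (r ^ (n / 2) * C) := by ring
        _ ≤ r * (r ^ (n / 2) * C) := mul_le_mul_of_nonneg_right (hr i j) hdist0
        _ = r ^ ((n + 2) / 2) * C := by rw [hdiv, pow_succ]; ring

lemma hausdorffEdist_singleton_singleton {X : Type*} [EMetricSpace X] (x y : X) :
    EMetric.hausdorffEdist ({x} : Set X) {y} = edist x y := by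
  exact Metric.hausdorffEDist_singleton

/-- The canonical projection π(ω) = a_ω from the code space (with the metric
d(α,β) = (1/2)^(first index where α, β differ)) onto the attractor A is continuous,
surjective onto A, and satisfies π(iω) = f_i(π(ω)). -/
theorem IFS_convex_contractions_canonical_projection
    {X : Type*} [MetricSpace X] [CompleteSpace X] [Nonempty X]
    {I : Type*} [Finite I] [Nonempty I] [TopologicalSpace I] [DiscreteTopology I]
    (f : I → X → X) (hf : ∀ i, Continuous (f i))
    (a b c : I → I → ℝ)
    (ha : ∀ i j, 0 ≤ a i j) (hb : ∀ i j, 0 ≤ b i j) (hc : ∀ i j, 0 ≤ c i j)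
    (hd : ∀ i j, a i j + b i j + c i j < 1)
    (hcc : ∀ i j (x y : X),
      dist (f i (f j x)) (f i (f j y)) ≤
        a i j * dist x y + b i j * dist (f i x) (f i y) + c i j * dist (f j x) (f j y))
    (A : Set X) (hAne : A.Nonempty) (hAc : IsCompact A) (hAfix : (⋃ i, f i '' A) = A)
    (π : (ℕ → I) → X)
    (hπ : ∀ (ω : ℕ → I) (B : Set X), B.Nonempty → IsCompact B →
      Filter.Tendsto
        (fun n : ℕ => EMetric.hausdorffEdist (compWord f ω n '' B) {π ω})
        Filter.atTop (nhds 0)) :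
    (letI : MetricSpace (ℕ → I) := PiNat.metricSpace
     Continuous π) ∧
    Set.range π = A ∧
    (∀ (i : I) (ω : ℕ → I),
      π (fun n => Nat.casesOn n i ω) = f i (π ω)) := by
  classical
  haveI : Fintype I := Fintype.ofFinite I
  obtain ⟨x₀, hx₀⟩ := hAne
  -- the contraction ratio
  set r : ℝ := Finset.univ.sup' Finset.univ_nonempty
    (fun p : I × I => a p.1 p.2 + b p.1 p.2 + c p.1 p.2) with hrdef
  have hrle : ∀ i j, a i j + b i j + c i j ≤ r := fun i j =>
    Finset.le_sup' (f := fun p : I × I => a p.1 p.2 + b p.1 p.2 + c p.1 p.2) (Finset.mem_univ (i, j))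
  have hrlt : r < 1 := (Finset.sup'_lt_iff Finset.univ_nonempty).mpr fun p _ => hd p.1 p.2
  have hr0 : 0 ≤ r := by
    obtain ⟨i⟩ := ‹Nonempty I›
    have := hrle i i
    have h0 : (0 : ℝ) ≤ a i i + b i i + c i i := by
      have := ha i i; have := hb i i; have := hc i i; linarith
    linarith
  -- the diameter bound
  set C : ℝ := Metric.diam A with hCdef
  have hC0 : 0 ≤ C := Metric.diam_nonneg
  have hC : ∀ x ∈ A, ∀ y ∈ A, dist x y ≤ C := fun x hx y hy =>
    Metric.dist_le_diam_of_mem hAc.isBounded hx hy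
  have hfA : ∀ i x, x ∈ A → f i x ∈ A := by
    intro i x hx
    have : f i x ∈ ⋃ i, f i '' A := Set.mem_iUnion.mpr ⟨i, ⟨x, hx, rfl⟩⟩
    rwa [hAfix] at this
  -- the key contraction estimate
  have key := compWord_dist_le f a b c ha hb hc hcc hfA hr0 hrlt.le hrle hC0 hC
  -- convergence of iterates
  have htend : ∀ (ω : ℕ → I) (x : X),
      Filter.Tendsto (fun n => compWord f ω n x) Filter.atTop (nhds (π ω)) := by
    intro ω x
    have h := hπ ω {x} ⟨x, rfl⟩ isCompact_singleton
    simp only [Set.image_singleton, hausdorffEdist_singleton_singleton] at h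
    exact tendsto_iff_edist_tendsto_0.mpr h
  -- the rate r^(n/2) * C tends to 0
  have hdiv : Filter.Tendsto (fun n : ℕ => n / 2) Filter.atTop Filter.atTop := by
    refine Filter.tendsto_atTop_atTop.mpr fun N => ⟨2 * N, fun n hn => ?_⟩
    omega
  have hrate : Filter.Tendsto (fun n : ℕ => r ^ (n / 2) * C) Filter.atTop (nhds 0) := by
    have h1 : Filter.Tendsto (fun n : ℕ => r ^ (n / 2)) Filter.atTop (nhds 0) :=
      (tendsto_pow_atTop_nhds_zero_of_lt_one hr0 hrlt).comp hdiv
    simpa using h1.mul_const C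
  -- part 3 : π (iω) = f i (π ω)
  have part3 : ∀ (i : I) (ω : ℕ → I), π (fun n => Nat.casesOn n i ω) = f i (π ω) := by
    intro i ω
    have h1 : Filter.Tendsto (fun n => compWord f (fun k => Nat.casesOn k i ω) (n + 1) x₀)
        Filter.atTop (nhds (π (fun n => Nat.casesOn n i ω))) :=
      (htend _ x₀).comp (Filter.tendsto_add_atTop_nat 1)
    have h2 : Filter.Tendsto (fun n => f i (compWord f ω n x₀))
        Filter.atTop (nhds (f i (π ω))) := ((hf i).tendsto _).comp (htend ω x₀)
    have heq : (fun n => compWord f (fun k => Nat.casesOn k i ω) (n + 1) x₀)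
        = fun n => f i (compWord f ω n x₀) := by
      funext n; exact compWord_cons f i ω n x₀
    rw [heq] at h1
    exact tendsto_nhds_unique h1 h2
  -- range π ⊆ A
  have hrangeA : ∀ ω : ℕ → I, π ω ∈ A := by
    intro ω
    exact hAc.isClosed.mem_of_tendsto (htend ω x₀)
      (Filter.Eventually.of_forall fun n => compWord_mem f hfA ω n hx₀)
  -- range π = A
  have part2 : Set.range π = A := by
    apply Set.eq_of_subset_of_subset
    · rintro _ ⟨ω, rfl⟩; exact hrangeA ω
    · intro x hx
      -- choose preimages
      have hsur : ∀ y, y ∈ A → ∃ p : I × X, p.2 ∈ A ∧ f p.1 p.2 = y := by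
        intro y hy
        rw [← hAfix] at hy
        obtain ⟨i, ⟨z, hz, hfz⟩⟩ := Set.mem_iUnion.mp hy
        exact ⟨(i, z), hz, hfz⟩
      set g : X → I × X := fun y =>
        if h : y ∈ A then (hsur y h).choose else (Classical.arbitrary I, y) with hg
      have hgA : ∀ y, y ∈ A → (g y).2 ∈ A ∧ f (g y).1 (g y).2 = y := by
        intro y hy
        simp only [hg, dif_pos hy]
        exact (hsur y hy).choose_spec
      set s : ℕ → X := fun n => (fun z => (g z).2)^[n] x with hs
      have hs0 : s 0 = x := rfl
      have hssucc : ∀ n, s (n + 1) = (g (s n)).2 := fun n =>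
        Function.iterate_succ_apply' (fun z => (g z).2) n x
      have hsA : ∀ n, s n ∈ A := by
        intro n
        induction n with
        | zero => exact hx
        | succ n ih => rw [hssucc]; exact (hgA _ ih).1
      set ω : ℕ → I := fun n => (g (s n)).1 with hω
      have hstep : ∀ n, f (ω n) (s (n + 1)) = s n := by
        intro n; rw [hssucc]; exact (hgA _ (hsA n)).2
      have hinv : ∀ n, compWord f ω n (s n) = x := by
        intro n
        induction n with
        | zero => exact hs0
        | succ n ih => rw [compWord_succ_right, hstep]; exact ih
      -- compWord f ω n x₀ tends to x
      have hbound : ∀ n, dist (compWord f ω n x₀) x ≤ r ^ (n / 2) * C := by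
        intro n
        rw [← hinv n]
        exact key n ω x₀ (s n) hx₀ (hsA n)
      have htx : Filter.Tendsto (fun n => compWord f ω n x₀) Filter.atTop (nhds x) :=
        tendsto_iff_dist_tendsto_zero.mpr
          (squeeze_zero (fun n => dist_nonneg) hbound hrate)
      exact ⟨ω, tendsto_nhds_unique (htend ω x₀) htx⟩
  -- the shift formula
  have hshift : ∀ (N : ℕ) (ω : ℕ → I), π ω = compWord f ω N (π fun k => ω (k + N)) := by
    intro N
    induction N with
    | zero =>
      intro ω
      have : (fun k => ω (k + 0)) = ω := by funext k; rfl
      rw [this]; rfl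
    | succ N ih =>
      intro ω
      have hcons : (fun n => Nat.casesOn n (ω 0) (fun k => ω (k + 1)) : ℕ → I) = ω := by
        funext n; cases n <;> rfl
      calc π ω = f (ω 0) (π fun k => ω (k + 1)) := by rw [← part3 (ω 0) _, hcons]
        _ = f (ω 0) (compWord f (fun k => ω (k + 1)) N (π fun k => ω (k + N + 1))) := by
            rw [← ih (fun k => ω (k + 1))]
        _ = compWord f ω (N + 1) (π fun k => ω (k + (N + 1))) := by
            have : (fun k => ω (k + N + 1)) = fun k => ω (k + (N + 1)) := by
              funext k; congr 1
            rw [this]; rfl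
  refine ⟨?_, part2, part3⟩
  -- continuity
  letI : MetricSpace (ℕ → I) := PiNat.metricSpace
  show Continuous π
  rw [Metric.continuous_iff]
  intro ω ε hε
  obtain ⟨N, hN⟩ := (hrate.eventually (gt_mem_nhds hε)).exists
  refine ⟨(1 / 2 : ℝ) ^ N, by positivity, fun α hα => ?_⟩
  have hagree : ∀ k < N, α k = ω k := fun k hk =>
    PiNat.apply_eq_of_dist_lt hα hk.le
  have h1 : π α = compWord f α N (π fun k => α (k + N)) := hshift N α
  have h2 : π ω = compWord f ω N (π fun k => ω (k + N)) := hshift N ω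
  rw [h1, h2, compWord_congr f N hagree]
  calc dist (compWord f ω N (π fun k => α (k + N))) (compWord f ω N (π fun k => ω (k + N)))
      ≤ r ^ (N / 2) * C := key N ω _ _ (hrangeA _) (hrangeA _)
    _ < ε := hN
end
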